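/- arXiv:1801.05335 — 3 statements merged into one kernel-verified Lean document; each statement's English description precedes it below -/
import Mathlib

section
/- Let Ω_0 = {(g_0,g_1,…) ∈ Ω : g_0 ∈ S_0} and let P_{Ω_0} be P_Ω conditioned on Ω_0. Then the pushforward of P_{Ω_0} under the projection π equals the normalized Lebesgue measure m on Y: π_* P_{Ω_0} = m. -/
open MeasureTheory ProbabilityTheory Filter Asymptotics
open scoped ENNReal NNReal Classical

/-- `f` is the Liverani–Saussol–Vaienti map with parameter `γ`. -/
def IsLSV (γ : ℝ) (f : ℝ → ℝ) : Prop :=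
  ∀ x : ℝ, f x = if x ≤ 1 / 2 then x * (1 + 2 ^ γ * x ^ γ) else 2 * x - 1

/-- `f` is a Holland–Gouëzel-type map with parameter `γ`. -/
def IsHG (γ : ℝ) (f : ℝ → ℝ) : Prop :=
  ∃ ρ : ℝ → ℝ,
    ContDiffOn ℝ 2 ρ (Set.Ioc (0 : ℝ) (1 / 2)) ∧
    (∀ x ∈ Set.Ioc (0 : ℝ) (1 / 2), 0 < ρ x) ∧
    (∀ c : ℝ, 0 < c →
      Tendsto (fun x => ρ (c * x) / ρ x) (nhdsWithin 0 (Set.Ioi 0)) (nhds 1)) ∧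
    (fun x => x * deriv ρ x) =o[nhdsWithin 0 (Set.Ioi 0)] ρ ∧
    (fun x => x ^ 2 * deriv (deriv ρ) x) =o[nhdsWithin 0 (Set.Ioi 0)] ρ ∧
    f (1 / 2) = 1 ∧
    (∀ x ∈ Set.Ioc (0 : ℝ) (1 / 2), 1 < deriv f x) ∧
    IntegrableOn (fun x => 1 / (x * (ρ x) ^ (1 / γ))) (Set.Ioc (0 : ℝ) (1 / 2)) ∧
    ∀ x : ℝ, f x = if x ≤ 1 / 2 then x * (1 + x ^ γ * ρ x) else 2 * x - 1

/-- The reference set `Y = (1/2, 1]`. -/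
def Yset : Set ℝ := Set.Ioc (1 / 2) 1

/-- The normalized Lebesgue measure on `Y`. -/
noncomputable def mY : Measure ℝ := (volume Yset)⁻¹ • volume.restrict Yset

/-- The first return time to `Y` under `f`. -/
noncomputable def rtime (f : ℝ → ℝ) (x : ℝ) : ℕ :=
  sInf {n : ℕ | 1 ≤ n ∧ f^[n] x ∈ Yset}

/-- The induced (first return) map `F = f^τ` on `Y`. -/
noncomputable def indmap (f : ℝ → ℝ) (x : ℝ) : ℝ :=
  f^[rtime f x] x

/-- The partition `α` of `Y` into the (nonempty) level sets of the return time `τ`. -/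
def partAlpha (f : ℝ → ℝ) : Set (Set ℝ) :=
  {s | ∃ k : ℕ, 1 ≤ k ∧ s = {x ∈ Yset | rtime f x = k} ∧ s.Nonempty}

/-- The set `A` of nonempty finite words in the alphabet `α`. -/
def Words (f : ℝ → ℝ) : Type :=
  {w : List (Set ℝ) // w ≠ [] ∧ ∀ s ∈ w, s ∈ partAlpha f}

/-- The cylinder `Y_w` associated with a word `w`. -/
def Yword (f : ℝ → ℝ) (w : List (Set ℝ)) : Set ℝ :=
  {y | ∀ k < w.length, (indmap f)^[k] y ∈ w.getD k ∅}

/-- `h(w) = τ(a₀) + ⋯ + τ(a_{n-1})`: the total return time of the word `w`. -/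
noncomputable def hof (f : ℝ → ℝ) (w : List (Set ℝ)) : ℕ :=
  (w.map fun s => sInf (rtime f '' s)).sum

/-- The state space `S = {(w, ℓ) : w ∈ A, 0 ≤ ℓ < h(w)}` of the Markov chain. -/
def MCState (f : ℝ → ℝ) : Type :=
  {p : Words f × ℕ // p.2 < hof f p.1.1}

noncomputable instance (f : ℝ → ℝ) : MeasurableSpace (MCState f) := ⊤

/-- The word component of a state. -/
def wordOf {f : ℝ → ℝ} (s : MCState f) : Words f := s.1.1

/-- The level component of a state. -/
def levOf {f : ℝ → ℝ} (s : MCState f) : ℕ := s.1.2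

/-- The transition probabilities of the Markov chain: climb the tower
deterministically, and from the top of the tower over `w` jump to `(w', 0)` with
probability `P_A(w')`. -/
noncomputable def mcTrans (f : ℝ → ℝ) (PA : Words f → ℝ≥0∞)
    (s t : MCState f) : ℝ≥0∞ :=
  if wordOf t = wordOf s ∧ levOf t = levOf s + 1 ∧ levOf s + 1 < hof f (wordOf s).1 then 1
  else if levOf s + 1 = hof f (wordOf s).1 ∧ levOf t = 0 then PA (wordOf t)
  else 0

/-- The invariant distribution `ν(w, ℓ) = P_A(w)/E_{P_A}(h)` of the chain. -/
noncomputable def mcNu (f : ℝ → ℝ) (PA : Words f → ℝ≥0∞) (s : MCState f) : ℝ≥0∞ :=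
  PA (wordOf s) / ∑' w : Words f, (hof f w.1 : ℝ≥0∞) * PA w

/-- Admissible (positive-probability) transitions. -/
def mcAdm (f : ℝ → ℝ) (s t : MCState f) : Prop :=
  (wordOf t = wordOf s ∧ levOf t = levOf s + 1 ∧ levOf s + 1 < hof f (wordOf s).1) ∨
  (levOf s + 1 = hof f (wordOf s).1 ∧ levOf t = 0)

/-- The space `Ω` of admissible trajectories of the chain. -/
def mcTraj (f : ℝ → ℝ) : Set (ℕ → MCState f) :=
  {x | ∀ n : ℕ, mcAdm f (x n) (x (n + 1))}

/-- The base `S₀ = {(w, 0)}` of the tower. -/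
def mcBase (f : ℝ → ℝ) : Set (MCState f) :=
  {s | levOf s = 0}

/-- The separation time `s(x,y)`: the number of visits of `x` to the base `S₀` before
`x` and `y` separate. -/
noncomputable def mcSep {f : ℝ → ℝ} (x y : ℕ → MCState f) : ℕ :=
  {n : ℕ | n < sInf {m : ℕ | x m ≠ y m} ∧ x n ∈ mcBase f}.ncard

/-- The subset `X_g = f^ℓ(Y_w)` of `[0,1]` attached to the state `g = (w, ℓ)`. -/
def mcX (f : ℝ → ℝ) (s : MCState f) : Set ℝ :=
  f^[levOf s] '' Yword f (wordOf s).1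

namespace PCL

/-- the common return time of an atom -/
noncomputable def kOf (f : ℝ → ℝ) (a : Set ℝ) : ℕ := sInf (rtime f '' a)

lemma atom_eq {f : ℝ → ℝ} {a : Set ℝ} (ha : a ∈ partAlpha f) :
    1 ≤ kOf f a ∧ a = {x ∈ Yset | rtime f x = kOf f a} := by
  obtain ⟨k, hk1, hs, hne⟩ := ha
  have him : rtime f '' a = {k} := by
    apply Set.eq_singleton_iff_nonempty_unique_mem.2
    refine ⟨hne.image _, ?_⟩
    rintro _ ⟨x, hx, rfl⟩
    rw [hs] at hx; exact hx.2
  have hk : kOf f a = k := by rw [kOf, him, csInf_singleton]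
  rw [hk]; exact ⟨hk1, hs⟩

lemma rtime_of_mem_atom {f : ℝ → ℝ} {a : Set ℝ} (ha : a ∈ partAlpha f)
    {x : ℝ} (hx : x ∈ a) : rtime f x = kOf f a := by
  have h := (atom_eq ha).2
  rw [h] at hx; exact hx.2

lemma indmap_of_mem_atom {f : ℝ → ℝ} {a : Set ℝ} (ha : a ∈ partAlpha f)
    {x : ℝ} (hx : x ∈ a) : indmap f x = f^[kOf f a] x := by
  rw [indmap, rtime_of_mem_atom ha hx]

lemma atom_subset_Yset {f : ℝ → ℝ} {a : Set ℝ} (ha : a ∈ partAlpha f) : a ⊆ Yset := by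
  intro x hx
  have h := (atom_eq ha).2
  rw [h] at hx; exact hx.1

lemma atom_disjoint {f : ℝ → ℝ} {a b : Set ℝ} (ha : a ∈ partAlpha f)
    (hb : b ∈ partAlpha f) (hab : a ≠ b) : a ∩ b = ∅ := by
  by_contra h
  obtain ⟨x, hxa, hxb⟩ := Set.nonempty_iff_ne_empty.2 h
  have h1 := rtime_of_mem_atom ha hxa
  have h2 := rtime_of_mem_atom hb hxb
  apply hab
  rw [(atom_eq ha).2, (atom_eq hb).2, ← h1, ← h2]

/-- admissible lists of letters -/
def Adm (f : ℝ → ℝ) (u : List (Set ℝ)) : Prop := ∀ s ∈ u, s ∈ partAlpha f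

lemma Yword_nil (f : ℝ → ℝ) : Yword f ([] : List (Set ℝ)) = Set.univ := by
  ext y; simp [Yword]

lemma Yword_cons (f : ℝ → ℝ) (a : Set ℝ) (u : List (Set ℝ)) :
    Yword f (a :: u) = a ∩ indmap f ⁻¹' Yword f u := by
  ext y
  constructor
  · intro h
    refine ⟨h 0 (by simp), ?_⟩
    intro k hk
    have := h (k + 1) (by simpa using Nat.succ_lt_succ hk)
    simpa [Function.iterate_succ_apply] using this
  · rintro ⟨h0, h1⟩ k hk
    cases k with
    | zero => simpa using h0
    | succ k =>
      have := h1 k (by simpa using Nat.lt_of_succ_lt_succ hk)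
      simpa [Function.iterate_succ_apply] using this

lemma Yword_append (f : ℝ → ℝ) (u v : List (Set ℝ)) :
    Yword f (u ++ v) = Yword f u ∩ (indmap f)^[u.length] ⁻¹' Yword f v := by
  induction u with
  | nil => simp [Yword_nil]
  | cons a u ih =>
    simp only [List.cons_append, Yword_cons, ih, List.length_cons]
    ext y
    simp [Function.iterate_succ_apply, Set.mem_inter_iff, and_assoc]

lemma Yword_mono {f : ℝ → ℝ} {u v : List (Set ℝ)} (h : u <+: v) :
    Yword f v ⊆ Yword f u := by
  obtain ⟨t, rfl⟩ := h
  rw [Yword_append]; exact Set.inter_subset_left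

lemma hof_cons (f : ℝ → ℝ) (a : Set ℝ) (u : List (Set ℝ)) :
    hof f (a :: u) = kOf f a + hof f u := by
  simp [hof, kOf]

lemma hof_append (f : ℝ → ℝ) (u v : List (Set ℝ)) :
    hof f (u ++ v) = hof f u + hof f v := by
  simp [hof]

lemma hof_pos {f : ℝ → ℝ} {u : List (Set ℝ)} (hu : u ≠ []) (ha : Adm f u) :
    1 ≤ hof f u := by
  cases u with
  | nil => exact absurd rfl hu
  | cons a u =>
    rw [hof_cons]
    have := (atom_eq (ha a (by simp))).1
    omega

lemma iterate_indmap_eq {f : ℝ → ℝ} {u : List (Set ℝ)} (ha : Adm f u)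
    {y : ℝ} (hy : y ∈ Yword f u) :
    (indmap f)^[u.length] y = f^[hof f u] y := by
  induction u generalizing y with
  | nil => simp [hof]
  | cons a u ih =>
    rw [Yword_cons] at hy
    have h1 : indmap f y = f^[kOf f a] y := indmap_of_mem_atom (ha a (by simp)) hy.1
    have h2 := ih (fun s hs => ha s (by simp [hs])) hy.2
    rw [List.length_cons, Function.iterate_succ_apply, h1, hof_cons,
      Nat.add_comm, Function.iterate_add_apply]
    rw [← h1]; exact h2

lemma Yword_disjoint {f : ℝ → ℝ} : ∀ {u v : List (Set ℝ)}, Adm f u → Adm f v →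
    ¬ u <+: v → ¬ v <+: u → Yword f u ∩ Yword f v = ∅ := by
  intro u
  induction u with
  | nil => intro v _ _ h _; exact absurd List.nil_prefix h
  | cons a u ih =>
    intro v hu hv huv hvu
    cases v with
    | nil => exact absurd List.nil_prefix hvu
    | cons b v =>
      by_cases hab : a = b
      · subst hab
        have h1 : ¬ u <+: v := fun h => huv (List.cons_prefix_cons.2 ⟨rfl, h⟩)
        have h2 : ¬ v <+: u := fun h => hvu (List.cons_prefix_cons.2 ⟨rfl, h⟩)
        have key := ih (fun s hs => hu s (by simp [hs])) (fun s hs => hv s (by simp [hs])) h1 h2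
        rw [Yword_cons, Yword_cons]
        ext y
        simp only [Set.mem_inter_iff, Set.mem_preimage, Set.mem_empty_iff_false, iff_false]
        rintro ⟨⟨_, hy1⟩, _, hy2⟩
        have hmem : indmap f y ∈ Yword f u ∩ Yword f v := ⟨hy1, hy2⟩
        rw [key] at hmem
        exact hmem
      · have key := atom_disjoint (hu a (by simp)) (hv b (by simp)) hab
        rw [Yword_cons, Yword_cons]
        ext y
        simp only [Set.mem_inter_iff, Set.mem_preimage, Set.mem_empty_iff_false, iff_false]
        rintro ⟨⟨hya, _⟩, hyb, _⟩
        have hmem : y ∈ a ∩ b := ⟨hya, hyb⟩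
        rw [key] at hmem
        exact hmem

end PCL
namespace PCL

lemma Yset_sub {x y : ℝ} (hx : x ∈ Yset) (hy : y ∈ Yset) : |x - y| ≤ 1 / 2 := by
  rw [abs_sub_le_iff]
  constructor <;> (obtain ⟨a1, a2⟩ := hx; obtain ⟨b1, b2⟩ := hy; linarith)

lemma diam_Yword {f : ℝ → ℝ} {lam : ℝ} (hlam : 1 < lam)
    (hexp : ∀ a ∈ partAlpha f, ∀ x ∈ a, ∀ y ∈ a,
      lam * |x - y| ≤ |indmap f x - indmap f y|) :
    ∀ u : List (Set ℝ), Adm f u → u ≠ [] →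
      ∀ x ∈ Yword f u, ∀ y ∈ Yword f u,
        |x - y| ≤ (1 / 2) * lam⁻¹ ^ (u.length - 1) := by
  have hlam0 : (0:ℝ) < lam := lt_trans one_pos hlam
  intro u
  induction u with
  | nil => intro _ h; exact absurd rfl h
  | cons a u ih =>
    intro hadm _ x hx y hy
    rw [Yword_cons] at hx hy
    cases u with
    | nil =>
      have hxY := atom_subset_Yset (hadm a (by simp)) hx.1
      have hyY := atom_subset_Yset (hadm a (by simp)) hy.1
      simpa using Yset_sub hxY hyY
    | cons b v =>
      have h1 := hexp a (hadm a (by simp)) x hx.1 y hy.1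
      have h2 := ih (fun s hs => hadm s (by simp [hs])) (by simp)
        (indmap f x) hx.2 (indmap f y) hy.2
      have hstep : |x - y| ≤ lam⁻¹ * |indmap f x - indmap f y| := by
        rw [inv_mul_eq_div]
        exact (le_div_iff₀' hlam0).2 h1
      calc |x - y| ≤ lam⁻¹ * |indmap f x - indmap f y| := hstep
      _ ≤ lam⁻¹ * ((1 / 2) * lam⁻¹ ^ ((b :: v).length - 1)) := by
          apply mul_le_mul_of_nonneg_left h2 (by positivity)
      _ = (1 / 2) * lam⁻¹ ^ ((a :: b :: v).length - 1) := by
          simp only [List.length_cons, Nat.add_sub_cancel]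
          ring

lemma measurableSet_Yset : MeasurableSet Yset := measurableSet_Ioc

lemma measurable_rtime {f : ℝ → ℝ} (hfm : Measurable f) : Measurable (rtime f) := by
  apply measurable_to_countable'
  intro k
  match k with
  | 0 =>
    have : rtime f ⁻¹' {0} = ⋂ n : ℕ, {x : ℝ | ¬ (1 ≤ n ∧ f^[n] x ∈ Yset)} := by
      ext x
      simp only [Set.mem_preimage, Set.mem_singleton_iff, Set.mem_iInter, Set.mem_setOf_eq,
        rtime]
      constructor
      · intro h n hn
        have hne : {n : ℕ | 1 ≤ n ∧ f^[n] x ∈ Yset}.Nonempty := ⟨n, hn⟩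
        have := Nat.sInf_mem hne
        rw [h] at this
        exact absurd this.1 (by norm_num)
      · intro h
        have : {n : ℕ | 1 ≤ n ∧ f^[n] x ∈ Yset} = ∅ := by
          ext n; simp only [Set.mem_setOf_eq, Set.mem_empty_iff_false, iff_false]; exact h n
        rw [this, Nat.sInf_empty]
    rw [this]
    apply MeasurableSet.iInter
    intro n
    rcases Nat.eq_zero_or_pos n with h | h
    · subst h; simp
    · have : {x : ℝ | ¬ (1 ≤ n ∧ f^[n] x ∈ Yset)} = (f^[n] ⁻¹' Yset)ᶜ := by
        ext x
        constructor
        · intro hx hm; exact hx ⟨h, hm⟩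
        · intro hx hm; exact hx hm.2
      rw [this]
      exact ((hfm.iterate n) measurableSet_Yset).compl
  | (k+1) =>
    have : rtime f ⁻¹' {k+1}
        = (f^[k+1] ⁻¹' Yset) ∩ ⋂ j ∈ Set.Ico 1 (k+1), (f^[j] ⁻¹' Yset)ᶜ := by
      ext x
      simp only [Set.mem_preimage, Set.mem_singleton_iff, Set.mem_inter_iff, Set.mem_iInter,
        Set.mem_Ico, Set.mem_compl_iff, rtime]
      constructor
      · intro h
        have hne : {n : ℕ | 1 ≤ n ∧ f^[n] x ∈ Yset}.Nonempty := by
          by_contra hne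
          rw [Set.not_nonempty_iff_eq_empty] at hne
          rw [hne, Nat.sInf_empty] at h
          exact Nat.succ_ne_zero k h.symm
        have hmem := Nat.sInf_mem hne
        rw [h] at hmem
        refine ⟨hmem.2, ?_⟩
        intro j hj hmemj
        have := Nat.sInf_le (s := {n : ℕ | 1 ≤ n ∧ f^[n] x ∈ Yset}) ⟨hj.1, hmemj⟩
        rw [h] at this
        omega
      · rintro ⟨h1, h2⟩
        have hmem : k + 1 ∈ {n : ℕ | 1 ≤ n ∧ f^[n] x ∈ Yset} := ⟨Nat.succ_le_succ (Nat.zero_le k), h1⟩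
        have hle := Nat.sInf_le hmem
        have hge := Nat.sInf_mem ⟨k+1, hmem⟩
        rcases Nat.lt_or_ge (sInf {n : ℕ | 1 ≤ n ∧ f^[n] x ∈ Yset}) (k+1) with h | h
        · exact absurd hge.2 (h2 _ ⟨hge.1, h⟩)
        · omega
    rw [this]
    refine MeasurableSet.inter ((hfm.iterate (k+1)) measurableSet_Yset) ?_
    exact MeasurableSet.biInter (Set.to_countable _)
      (fun j _ => ((hfm.iterate j) measurableSet_Yset).compl)

lemma measurable_indmap {f : ℝ → ℝ} (hfm : Measurable f) : Measurable (indmap f) := by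
  have h1 : Measurable (fun p : ℝ × ℕ => f^[p.2] p.1) := by
    apply measurable_from_prod_countable_left
    intro n
    exact hfm.iterate n
  have h2 : indmap f = (fun p : ℝ × ℕ => f^[p.2] p.1) ∘ (fun x => (x, rtime f x)) := rfl
  rw [h2]
  exact h1.comp (measurable_id.prodMk (measurable_rtime hfm))

lemma measurableSet_atom {f : ℝ → ℝ} (hfm : Measurable f) {a : Set ℝ}
    (ha : a ∈ partAlpha f) : MeasurableSet a := by
  rw [(atom_eq ha).2]
  have : {x | x ∈ Yset ∧ rtime f x = kOf f a} = Yset ∩ rtime f ⁻¹' {kOf f a} := rfl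
  rw [this]
  exact measurableSet_Yset.inter ((measurable_rtime hfm) (MeasurableSet.singleton _))

lemma measurableSet_Yword {f : ℝ → ℝ} (hfm : Measurable f) :
    ∀ u : List (Set ℝ), Adm f u → MeasurableSet (Yword f u) := by
  intro u
  induction u with
  | nil => rw [Yword_nil]; exact fun _ => MeasurableSet.univ
  | cons a u ih =>
    intro hadm
    rw [Yword_cons]
    exact (measurableSet_atom hfm (hadm a (by simp))).inter
      ((measurable_indmap hfm) (ih (fun s hs => hadm s (by simp [hs]))))

lemma countable_words (f : ℝ → ℝ) : Countable (Words f) := by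
  have hinj : Function.Injective (fun w : Words f => w.1.map (kOf f)) := by
    intro w w' h
    apply Subtype.ext
    have e1 : ∀ (w : Words f), w.1
        = (w.1.map (kOf f)).map (fun k => {x | x ∈ Yset ∧ rtime f x = k}) := by
      intro w
      rw [List.map_map]
      conv_lhs => rw [← List.map_id w.1]
      apply List.map_congr_left
      intro s hs
      exact (atom_eq (w.2.2 s hs)).2
    rw [e1 w, e1 w']
    simp only at h
    rw [h]
  exact hinj.countable

lemma countable_mcstate (f : ℝ → ℝ) : Countable (MCState f) := by
  haveI := countable_words f
  have hinj : Function.Injective (fun s : MCState f => s.1) := fun a b h => Subtype.ext h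
  exact hinj.countable

lemma measurableSet_mcstate {f : ℝ → ℝ} (s : Set (MCState f)) : MeasurableSet s :=
  MeasurableSpace.measurableSet_top

end PCL
namespace PCL

variable {f : ℝ → ℝ}

lemma stateEq (s t : MCState f) (hw : wordOf s = wordOf t) (hl : levOf s = levOf t) :
    s = t := Subtype.ext (Prod.ext hw hl)

/-- the base state over a word -/
def baseSt (w : Words f) : MCState f := ⟨(w, 0), hof_pos w.2.1 w.2.2⟩

/-- the tower states over a word -/
noncomputable def towerSt (w : Words f) (n : ℕ) : MCState f :=
  ⟨(w, min n (hof f w.1 - 1)),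
    lt_of_le_of_lt (min_le_right _ _) (Nat.sub_lt (hof_pos w.2.1 w.2.2) one_pos)⟩

lemma towerSt_word (w : Words f) (n : ℕ) : wordOf (towerSt w n) = w := rfl

lemma towerSt_lev (w : Words f) (n : ℕ) : levOf (towerSt w n) = min n (hof f w.1 - 1) := rfl

lemma towerSt_eq (w : Words f) {n : ℕ} (h : n < hof f w.1) : towerSt w n = ⟨(w, n), h⟩ :=
  stateEq _ _ rfl (Nat.min_eq_left (by omega))

lemma towerSt_zero (w : Words f) : towerSt w 0 = baseSt w :=
  stateEq _ _ rfl (by simp [towerSt, levOf, baseSt])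

lemma baseSt_word (w : Words f) : wordOf (baseSt w) = w := rfl

lemma baseSt_lev (w : Words f) : levOf (baseSt w) = 0 := rfl

lemma baseSt_inj : Function.Injective (baseSt (f := f)) := by
  intro w w' h
  have := congrArg wordOf h
  exact this

/-- transitions inside the tower -/
lemma trans_climb (PA : Words f → ℝ≥0∞) (w : Words f) {j : ℕ} (hj : j + 1 < hof f w.1) :
    mcTrans f PA (towerSt w j) (towerSt w (j + 1)) = 1 := by
  have h1 : levOf (towerSt w j) = j := Nat.min_eq_left (by omega)
  have h2 : levOf (towerSt w (j + 1)) = j + 1 := Nat.min_eq_left (by omega)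
  rw [mcTrans, if_pos]
  rw [towerSt_word, towerSt_word, h1, h2]
  exact ⟨rfl, rfl, hj⟩

/-- transitions from the top of the tower -/
lemma trans_top (PA : Words f → ℝ≥0∞) (w : Words f) (t : MCState f) :
    mcTrans f PA (towerSt w (hof f w.1 - 1)) t
      = if levOf t = 0 then PA (wordOf t) else 0 := by
  have hH := hof_pos w.2.1 w.2.2
  have h1 : levOf (towerSt w (hof f w.1 - 1)) = hof f w.1 - 1 := Nat.min_eq_left le_rfl
  rw [mcTrans, if_neg]
  · by_cases ht : levOf t = 0
    · rw [if_pos, if_pos ht]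
      refine ⟨?_, ht⟩
      rw [towerSt_word, h1]
      omega
    · rw [if_neg, if_neg ht]
      rintro ⟨_, h⟩; exact ht h
  · rintro ⟨_, _, hcon⟩
    rw [towerSt_word, h1] at hcon
    omega

/-- cylinders in trajectory space -/
def Cyl (n : ℕ) (c : ℕ → MCState f) : Set (ℕ → MCState f) := {y | ∀ k ≤ n, y k = c k}

lemma mem_Cyl_zero (c y : ℕ → MCState f) : y ∈ Cyl 0 c ↔ y 0 = c 0 := by
  constructor
  · intro h; exact h 0 le_rfl
  · intro h k hk
    rw [Nat.le_zero] at hk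
    rw [hk]; exact h

lemma measurableSet_Cyl (n : ℕ) (c : ℕ → MCState f) : MeasurableSet (Cyl n c) := by
  have : Cyl n c = ⋂ k ∈ Set.Iic n, (fun y : ℕ → MCState f => y k) ⁻¹' {c k} := by
    ext y
    simp [Cyl, Set.mem_iInter]
  rw [this]
  exact MeasurableSet.biInter (Set.to_countable _)
    (fun k _ => (measurable_pi_apply k) (measurableSet_mcstate _))

/-- the family of cylinders -/
def CylSys (f : ℝ → ℝ) : Set (Set (ℕ → MCState f)) := {S | ∃ n c, S = Cyl n c}

lemma isPiSystem_CylSys : IsPiSystem (CylSys f) := by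
  have key : ∀ (n1 n2 : ℕ) (c1 c2 : ℕ → MCState f), n1 ≤ n2 →
      (Cyl n1 c1 ∩ Cyl n2 c2).Nonempty → Cyl n1 c1 ∩ Cyl n2 c2 = Cyl n2 c2 := by
    intro n1 n2 c1 c2 hn ⟨y0, hy1, hy2⟩
    apply Set.inter_eq_self_of_subset_right
    intro y hy k hk
    rw [hy k (le_trans hk hn), ← hy2 k (le_trans hk hn), hy1 k hk]
  rintro S1 ⟨n1, c1, rfl⟩ S2 ⟨n2, c2, rfl⟩ hne
  rcases le_total n1 n2 with h | h
  · rw [key n1 n2 c1 c2 h hne]; exact ⟨n2, c2, rfl⟩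
  · rw [Set.inter_comm] at hne ⊢
    rw [key n2 n1 c2 c1 h hne]; exact ⟨n1, c1, rfl⟩

lemma generateFrom_CylSys (f : ℝ → ℝ) :
    (inferInstance : MeasurableSpace (ℕ → MCState f))
      = MeasurableSpace.generateFrom (CylSys f) := by
  haveI := countable_mcstate f
  apply le_antisymm
  · rw [show (inferInstance : MeasurableSpace (ℕ → MCState f)) = MeasurableSpace.pi from rfl]
    apply iSup_le
    intro i
    intro T hT
    obtain ⟨U, _, rfl⟩ := hT
    have hU : (fun y : ℕ → MCState f => y i) ⁻¹' U = ⋃ s ∈ U, {y : ℕ → MCState f | y i = s} := by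
      ext y; simp
    rw [hU]
    apply MeasurableSet.biUnion (Set.to_countable _)
    intro s _
    have hsingle : {y : ℕ → MCState f | y i = s}
        = ⋃ d : {d : Fin (i + 1) → MCState f // d ⟨i, Nat.lt_succ_self i⟩ = s},
            Cyl i (fun k => d.1 ⟨min k i, Nat.lt_succ_of_le (min_le_right k i)⟩) := by
      ext y
      simp only [Set.mem_setOf_eq, Set.mem_iUnion]
      constructor
      · intro h
        refine ⟨⟨fun k => y k.1, h⟩, ?_⟩
        intro k hk
        simp [Nat.min_eq_left hk]
      · rintro ⟨d, hd⟩
        have := hd i le_rfl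
        simp only [Nat.min_self] at this
        rw [this, d.2]
    rw [hsingle]
    apply MeasurableSet.iUnion
    intro d
    exact MeasurableSpace.measurableSet_generateFrom ⟨i, _, rfl⟩
  · apply MeasurableSpace.generateFrom_le
    rintro S ⟨n, c, rfl⟩
    exact measurableSet_Cyl n c

end PCL
namespace PCL

variable {f : ℝ → ℝ}

/-- expected return time -/
noncomputable def Etot (f : ℝ → ℝ) (PA : Words f → ℝ≥0∞) : ℝ≥0∞ :=
  ∑' w : Words f, (hof f w.1 : ℝ≥0∞) * PA w

lemma mcNu_eq (PA : Words f → ℝ≥0∞) (s : MCState f) :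
    mcNu f PA s = PA (wordOf s) / Etot f PA := rfl

lemma Etot_ne_zero {PA : Words f → ℝ≥0∞} (hPAsum : ∑' w : Words f, PA w = 1) :
    Etot f PA ≠ 0 := by
  have h1 : (1 : ℝ≥0∞) ≤ Etot f PA := by
    rw [← hPAsum]
    apply ENNReal.tsum_le_tsum
    intro w
    conv_lhs => rw [← one_mul (PA w)]
    apply mul_le_mul_left
    exact_mod_cast Nat.one_le_cast.2 (hof_pos w.2.1 w.2.2)
  intro h
  rw [h] at h1
  exact (not_le.2 zero_lt_one) h1

/-- the conditioning event -/
def Bev (f : ℝ → ℝ) : Set (ℕ → MCState f) := {x | x 0 ∈ mcBase f}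

lemma measurableSet_Bev : MeasurableSet (Bev f) :=
  (measurable_pi_apply 0) (measurableSet_mcstate _)

lemma Bev_eq_iUnion : Bev f = ⋃ w : Words f, Cyl 0 (fun _ => baseSt w) := by
  ext x
  simp only [Bev, Set.mem_setOf_eq, Set.mem_iUnion]
  constructor
  · intro h
    refine ⟨wordOf (x 0), ?_⟩
    rw [mem_Cyl_zero]
    exact stateEq _ _ rfl h
  · rintro ⟨w, hw⟩
    rw [mem_Cyl_zero] at hw
    show levOf (x 0) = 0
    rw [hw, baseSt_lev]

section Chain

variable {PA : Words f → ℝ≥0∞} {PΩ : Measure (ℕ → MCState f)}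

/-- cylinder hypothesis -/
def HCyl (PA : Words f → ℝ≥0∞) (PΩ : Measure (ℕ → MCState f)) : Prop :=
  ∀ (n : ℕ) (x : ℕ → MCState f),
      PΩ {y | ∀ k ≤ n, y k = x k}
        = mcNu f PA (x 0) * ∏ k ∈ Finset.range n, mcTrans f PA (x k) (x (k + 1))

lemma PΩ_Cyl (hcyl : HCyl PA PΩ) (n : ℕ) (c : ℕ → MCState f) :
    PΩ (Cyl n c) = mcNu f PA (c 0) * ∏ k ∈ Finset.range n, mcTrans f PA (c k) (c (k + 1)) :=
  hcyl n c

lemma PΩ_state (hcyl : HCyl PA PΩ) (s : MCState f) :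
    PΩ (Cyl 0 (fun _ => s)) = mcNu f PA s := by
  rw [PΩ_Cyl hcyl]
  simp

lemma Etot_ne_top (hcyl : HCyl PA PΩ) [IsProbabilityMeasure PΩ] : Etot f PA ≠ ⊤ := by
  haveI := countable_mcstate f
  intro htop
  have huniv : (Set.univ : Set (ℕ → MCState f)) = ⋃ s : MCState f, Cyl 0 (fun _ => s) := by
    ext x
    simp only [Set.mem_univ, Set.mem_iUnion, true_iff]
    exact ⟨x 0, (mem_Cyl_zero _ _).2 rfl⟩
  have h1 : (1 : ℝ≥0∞) = PΩ Set.univ := (measure_univ).symm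
  rw [huniv, measure_iUnion ?_ (fun s => measurableSet_Cyl 0 _)] at h1
  · have hz : ∀ s : MCState f, PΩ (Cyl 0 (fun _ => s)) = 0 := by
      intro s
      rw [PΩ_state hcyl, mcNu_eq, htop]
      simp
    rw [tsum_congr hz] at h1
    simp at h1
  · intro s t hst
    rw [Function.onFun, Set.disjoint_left]
    intro y hy1 hy2
    rw [mem_Cyl_zero] at hy1 hy2
    exact hst (hy1 ▸ hy2)

lemma PΩ_Bev (hcyl : HCyl PA PΩ) (hPAsum : ∑' w : Words f, PA w = 1) :
    PΩ (Bev f) = (Etot f PA)⁻¹ := by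
  haveI := countable_words f
  rw [Bev_eq_iUnion, measure_iUnion ?_ (fun w => measurableSet_Cyl 0 _)]
  · have : ∀ w : Words f, PΩ (Cyl 0 (fun _ => baseSt w)) = PA w * (Etot f PA)⁻¹ := by
      intro w
      rw [PΩ_state hcyl, mcNu_eq, baseSt_word, div_eq_mul_inv]
    rw [tsum_congr this, ENNReal.tsum_mul_right, hPAsum, one_mul]
  · intro w w' hww
    rw [Function.onFun, Set.disjoint_left]
    intro y hy1 hy2
    rw [mem_Cyl_zero] at hy1 hy2
    exact hww (baseSt_inj (hy1 ▸ hy2))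

/-- the event of climbing the tower over `w` -/
def Ew (w : Words f) : Set (ℕ → MCState f) := Cyl (hof f w.1 - 1) (towerSt w)

lemma measurableSet_Ew (w : Words f) : MeasurableSet (Ew w) := measurableSet_Cyl _ _

lemma Ew_subset_Bev (w : Words f) : Ew w ⊆ Bev f := by
  intro y hy
  have h0 := hy 0 (Nat.zero_le _)
  rw [towerSt_zero] at h0
  rw [Bev, Set.mem_setOf_eq, h0]
  rfl

lemma PΩ_Ew (hcyl : HCyl PA PΩ) (w : Words f) : PΩ (Ew w) = PA w / Etot f PA := by
  rw [Ew, PΩ_Cyl hcyl, Finset.prod_eq_one, mul_one, towerSt_zero, mcNu_eq, baseSt_word]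
  intro j hj
  rw [Finset.mem_range] at hj
  have hj' : j + 1 < hof f w.1 := by omega
  rw [towerSt_eq w (by omega : j < hof f w.1), towerSt_eq w hj',
    ← towerSt_eq w (by omega : j < hof f w.1), ← towerSt_eq w hj']
  exact trans_climb PA w hj'

end Chain

end PCL
namespace PCL

variable {f : ℝ → ℝ} {PA : Words f → ℝ≥0∞} {PΩ : Measure (ℕ → MCState f)}

/-- trajectory glued from the tower over `w` followed by `c` -/
noncomputable def glue (w : Words f) (c : ℕ → MCState f) : ℕ → MCState f :=
  fun j => if h : j < hof f w.1 then ⟨(w, j), h⟩ else c (j - hof f w.1)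

/-- the shift on trajectory space -/
def shiftT (f : ℝ → ℝ) (H : ℕ) : (ℕ → MCState f) → (ℕ → MCState f) := fun y n => y (n + H)

lemma measurable_shiftT (H : ℕ) : Measurable (shiftT f H) :=
  measurable_pi_lambda _ (fun n => measurable_pi_apply (n + H))

lemma glue_lt {w : Words f} {c : ℕ → MCState f} {j : ℕ} (h : j < hof f w.1) :
    glue w c j = towerSt w j := by
  simp only [glue]
  exact (dif_pos h).trans (towerSt_eq w h).symm

lemma glue_ge {w : Words f} {c : ℕ → MCState f} {j : ℕ} (h : hof f w.1 ≤ j) :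
    glue w c j = c (j - hof f w.1) := by
  simp only [glue]
  exact dif_neg (not_lt.2 h)

lemma Ew_inter_shift (w : Words f) (n : ℕ) (c : ℕ → MCState f) :
    Ew w ∩ shiftT f (hof f w.1) ⁻¹' Cyl n c = Cyl (hof f w.1 + n) (glue w c) := by
  have hH := hof_pos w.2.1 w.2.2
  set H := hof f w.1 with hHdef
  ext y
  constructor
  · rintro ⟨h1, h2⟩ k hk
    by_cases hkH : k < H
    · rw [h1 k (by omega)]
      exact (glue_lt hkH).symm
    · have he : (k - H) + H = k := by omega
      have := h2 (k - H) (by omega)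
      rw [shiftT, he] at this
      rw [this]
      exact (glue_ge (f := f) (by omega)).symm
  · intro h
    constructor
    · intro k hk
      rw [h k (by omega), glue_lt (by omega)]
    · intro k hk
      show y (k + H) = c k
      rw [h (k + H) (by omega), glue_ge (by omega)]
      congr 1
      omega

lemma prod_glue (PA : Words f → ℝ≥0∞) (w : Words f) (c : ℕ → MCState f) (n : ℕ) :
    (∏ j ∈ Finset.range (hof f w.1 + n),
        mcTrans f PA (glue w c j) (glue w c (j + 1)))
      = mcTrans f PA (towerSt w (hof f w.1 - 1)) (c 0)
          * ∏ k ∈ Finset.range n, mcTrans f PA (c k) (c (k + 1)) := by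
  have hH := hof_pos w.2.1 w.2.2
  set H := hof f w.1 with hHdef
  have hsplit : H + n = (H - 1) + (n + 1) := by omega
  rw [hsplit, Finset.prod_range_add, Finset.prod_range_succ']
  have e1 : ∀ j ∈ Finset.range (H - 1),
      mcTrans f PA (glue w c j) (glue w c (j + 1)) = 1 := by
    intro j hj
    rw [Finset.mem_range] at hj
    rw [glue_lt (by omega), glue_lt (by omega)]
    exact trans_climb PA w (by omega)
  have e2 : glue w c (H - 1) = towerSt w (H - 1) := glue_lt (by omega)
  have e3 : glue w c (H - 1 + 1) = c 0 := by
    rw [glue_ge (by omega)]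
    congr 1
    omega
  have e4 : ∀ i, mcTrans f PA (glue w c (H - 1 + (i + 1))) (glue w c (H - 1 + (i + 1) + 1))
      = mcTrans f PA (c i) (c (i + 1)) := by
    intro i
    rw [glue_ge (by omega), glue_ge (by omega)]
    congr 2 <;> omega
  rw [Finset.prod_eq_one e1, Finset.prod_congr rfl (fun i _ => e4 i)]
  rw [show H - 1 + 0 = H - 1 from rfl, e2, e3]
  ring

lemma PA_ne_top (hPAsum : ∑' w : Words f, PA w = 1) (w : Words f) : PA w ≠ ⊤ := by
  have : PA w ≤ 1 := hPAsum ▸ ENNReal.le_tsum w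
  exact ne_top_of_le_ne_top ENNReal.one_ne_top this

/-- The Markov property at the return time to the base. -/
lemma markov (hcyl : HCyl PA PΩ) [IsProbabilityMeasure PΩ]
    (hPAsum : ∑' w : Words f, PA w = 1) (w : Words f) :
    (PΩ.restrict (Ew w)).map (shiftT f (hof f w.1))
      = PA w • PΩ.restrict (Bev f) := by
  have hH := hof_pos w.2.1 w.2.2
  haveI : IsFiniteMeasure ((PΩ.restrict (Ew w)).map (shiftT f (hof f w.1))) := by
    constructor
    rw [Measure.map_apply (measurable_shiftT _) MeasurableSet.univ, Set.preimage_univ,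
      Measure.restrict_apply MeasurableSet.univ, Set.univ_inter]
    exact measure_lt_top PΩ _
  haveI : IsFiniteMeasure (PA w • PΩ.restrict (Bev f)) := by
    constructor
    rw [Measure.smul_apply, smul_eq_mul]
    exact ENNReal.mul_lt_top (lt_top_iff_ne_top.2 (PA_ne_top hPAsum w)) (measure_lt_top _ _)
  apply MeasureTheory.ext_of_generate_finite (CylSys f) (generateFrom_CylSys f)
    isPiSystem_CylSys
  · rintro S ⟨n, c, rfl⟩
    rw [Measure.map_apply (measurable_shiftT _) (measurableSet_Cyl n c),
      Measure.restrict_apply ((measurable_shiftT _) (measurableSet_Cyl n c)),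
      Set.inter_comm, Ew_inter_shift, PΩ_Cyl hcyl, prod_glue,
      Measure.smul_apply, smul_eq_mul,
      Measure.restrict_apply (measurableSet_Cyl n c)]
    have hg0 : glue w c 0 = baseSt w := by
      rw [glue_lt (by omega), towerSt_zero]
    rw [hg0, trans_top]
    by_cases hc0 : levOf (c 0) = 0
    · have hBsub : Cyl n c ∩ Bev f = Cyl n c := by
        apply Set.inter_eq_self_of_subset_left
        intro y hy
        show levOf (y 0) = 0
        rw [(mem_Cyl_zero c y).1 (fun k hk => hy k (le_trans hk (Nat.zero_le n)))]
        exact hc0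
      rw [if_pos hc0, hBsub, PΩ_Cyl hcyl, mcNu_eq, mcNu_eq, baseSt_word,
        div_eq_mul_inv, div_eq_mul_inv]
      ring
    · have hBdis : Cyl n c ∩ Bev f = ∅ := by
        ext y
        simp only [Set.mem_inter_iff, Set.mem_empty_iff_false, iff_false]
        rintro ⟨hy1, hy2⟩
        apply hc0
        have := hy1 0 (Nat.zero_le n)
        rw [← this]
        exact hy2
      rw [if_neg hc0, hBdis, measure_empty, mul_zero]
      ring
  · rw [Measure.map_apply (measurable_shiftT _) MeasurableSet.univ, Set.preimage_univ,
      Measure.restrict_apply MeasurableSet.univ, Set.univ_inter,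
      Measure.smul_apply, smul_eq_mul,
      Measure.restrict_apply MeasurableSet.univ, Set.univ_inter,
      PΩ_Ew hcyl, PΩ_Bev hcyl hPAsum, div_eq_mul_inv]

end PCL
namespace PCL

variable {f : ℝ → ℝ}

lemma mcX_base (w : Words f) : mcX f (baseSt w) = Yword f w.1 := by
  show f^[levOf (baseSt w)] '' Yword f (wordOf (baseSt w)).1 = _
  rw [baseSt_lev, baseSt_word, Function.iterate_zero, Set.image_id]

lemma forcing {x : ℕ → MCState f} (hx : x ∈ mcTraj f) (w : Words f)
    (h0 : x 0 = baseSt w) :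
    (∀ n < hof f w.1, x n = towerSt w n) ∧ levOf (x (hof f w.1)) = 0 := by
  have hH := hof_pos w.2.1 w.2.2
  set H := hof f w.1 with hHdef
  have key : ∀ n, n < H → x n = towerSt w n := by
    intro n
    induction n with
    | zero => intro _; rw [h0, towerSt_zero]
    | succ n ih =>
      intro hn
      have hxn := ih (by omega)
      have hadm := hx n
      rw [hxn] at hadm
      have hlev : levOf (towerSt w n) = n := Nat.min_eq_left (by omega)
      rcases hadm with ⟨hw, hl, _⟩ | ⟨hl, _⟩
      · apply stateEq
        · rw [hw, towerSt_word, towerSt_word]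
        · rw [hl, hlev, towerSt_lev, Nat.min_eq_left (by omega)]
      · exfalso
        rw [hlev, towerSt_word] at hl
        omega
  refine ⟨key, ?_⟩
  have hxn := key (H - 1) (by omega)
  have hadm := hx (H - 1)
  have hidx : H - 1 + 1 = H := by omega
  rw [hxn, hidx] at hadm
  have hlev : levOf (towerSt w (H - 1)) = H - 1 := Nat.min_eq_left le_rfl
  rcases hadm with ⟨_, _, hcon⟩ | ⟨_, hl⟩
  · exfalso
    rw [hlev, towerSt_word] at hcon
    omega
  · exact hl

lemma shift_mem_traj {x : ℕ → MCState f} (hx : x ∈ mcTraj f) (H : ℕ) :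
    shiftT f H x ∈ mcTraj f := by
  intro n
  have h1 : shiftT f H x n = x (n + H) := rfl
  have h2 : shiftT f H x (n + 1) = x (n + H + 1) := by
    show x (n + 1 + H) = x (n + H + 1)
    congr 1
    omega
  rw [h1, h2]
  exact hx (n + H)

lemma itin : ∀ (k : ℕ) (x : ℕ → MCState f), x ∈ mcTraj f → levOf (x 0) = 0 →
    ∃ u : List (Set ℝ), Adm f u ∧ k ≤ u.length ∧
      ∀ z : ℝ, (∀ n, f^[n] z ∈ mcX f (x n)) → z ∈ Yword f u := by
  intro k
  induction k with
  | zero =>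
    intro x _ _
    refine ⟨[], fun s hs => absurd hs List.not_mem_nil, by simp, ?_⟩
    intro z _
    rw [Yword_nil]
    trivial
  | succ k ih =>
    intro x hx h0
    set w := wordOf (x 0) with hw
    have h00 : x 0 = baseSt w := stateEq _ _ rfl h0
    set H := hof f w.1 with hH
    have hforce := forcing hx w h00
    have hshift : shiftT f H x ∈ mcTraj f := shift_mem_traj hx H
    have hshift0 : levOf (shiftT f H x 0) = 0 := by
      show levOf (x (0 + H)) = 0
      rw [Nat.zero_add]
      exact hforce.2
    obtain ⟨u', hadm', hlen', hall'⟩ := ih (shiftT f H x) hshift hshift0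
    refine ⟨w.1 ++ u', ?_, ?_, ?_⟩
    · intro s hs
      rcases List.mem_append.1 hs with h | h
      · exact w.2.2 s h
      · exact hadm' s h
    · rw [List.length_append]
      have := List.length_pos_iff.2 w.2.1
      omega
    · intro z hz
      have hz0 : z ∈ Yword f w.1 := by
        have := hz 0
        rw [h00, Function.iterate_zero, id, mcX_base] at this
        exact this
      have hzH : ∀ n, f^[n] (f^[H] z) ∈ mcX f (shiftT f H x n) := by
        intro n
        rw [← Function.iterate_add_apply]
        exact hz (n + H)
      have hzH' : f^[H] z ∈ Yword f u' := hall' _ hzH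
      rw [Yword_append]
      refine ⟨hz0, ?_⟩
      show (indmap f)^[w.1.length] z ∈ Yword f u'
      rw [iterate_indmap_eq w.2.2 hz0]
      exact hzH'

lemma proj_unique {lam : ℝ} (hlam : 1 < lam)
    (hexp : ∀ a ∈ partAlpha f, ∀ x ∈ a, ∀ y ∈ a,
      lam * |x - y| ≤ |indmap f x - indmap f y|)
    {x : ℕ → MCState f} (hx : x ∈ mcTraj f) (h0 : levOf (x 0) = 0)
    {z1 z2 : ℝ} (h1 : ∀ n, f^[n] z1 ∈ mcX f (x n)) (h2 : ∀ n, f^[n] z2 ∈ mcX f (x n)) :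
    z1 = z2 := by
  have hlam0 : (0:ℝ) < lam := lt_trans one_pos hlam
  have hinv0 : (0:ℝ) ≤ lam⁻¹ := by positivity
  have hinv1 : lam⁻¹ < 1 := by
    rw [inv_lt_one_iff₀]
    right; exact hlam
  have key : ∀ k : ℕ, |z1 - z2| ≤ (1 / 2) * lam⁻¹ ^ k := by
    intro k
    obtain ⟨u, hadm, hlen, hall⟩ := itin (k + 1) x hx h0
    have hne : u ≠ [] := by
      intro h
      rw [h] at hlen
      simp at hlen
    have := diam_Yword hlam hexp u hadm hne z1 (hall z1 h1) z2 (hall z2 h2)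
    refine le_trans this ?_
    apply mul_le_mul_of_nonneg_left _ (by norm_num)
    apply pow_le_pow_of_le_one hinv0 (le_of_lt hinv1)
    omega
  have htend : Filter.Tendsto (fun k : ℕ => (1 / 2 : ℝ) * lam⁻¹ ^ k)
      Filter.atTop (nhds 0) := by
    have := tendsto_pow_atTop_nhds_zero_of_lt_one hinv0 hinv1
    simpa using this.const_mul (1 / 2 : ℝ)
  have hle : |z1 - z2| ≤ 0 := ge_of_tendsto' htend key
  have := abs_nonneg (z1 - z2)
  have : |z1 - z2| = 0 := le_antisymm hle this
  linarith [abs_eq_zero.1 this, sub_eq_zero.1 (abs_eq_zero.1 this)]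

end PCL
namespace PCL

variable {f : ℝ → ℝ} {PA : Words f → ℝ≥0∞}

/-- one step of the renewal recursion -/
noncomputable def branch (f : ℝ → ℝ) (PA : Words f → ℝ≥0∞)
    (r : List (Set ℝ) → ℝ≥0∞) (u : List (Set ℝ)) : ℝ≥0∞ :=
  ∑' w : Words f, PA w *
    (if u <+: w.1 then 1 else if w.1 <+: u then r (u.drop w.1.length) else 0)

lemma renewal_q (hfm : Measurable f) {mw : Words f → Measure ℝ}
    (hdis : mY = Measure.sum fun w : Words f => PA w • mw w)
    (hmwp : ∀ w : Words f, IsProbabilityMeasure (mw w))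
    (hmwsupp : ∀ w : Words f, mw w (Yword f w.1)ᶜ = 0)
    (hmwpush : ∀ w : Words f, (mw w).map ((indmap f)^[w.1.length]) = mY)
    (u : List (Set ℝ)) (hadm : Adm f u) :
    mY (Yword f u) = branch f PA (fun v => mY (Yword f v)) u := by
  rw [branch, hdis, Measure.sum_apply _ (measurableSet_Yword hfm u hadm)]
  apply tsum_congr
  intro w
  haveI := hmwp w
  rw [Measure.smul_apply, smul_eq_mul]
  congr 1
  by_cases h1 : u <+: w.1
  · rw [if_pos h1]
    have hsub : Yword f w.1 ⊆ Yword f u := Yword_mono h1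
    have hz : mw w (Yword f u)ᶜ = 0 :=
      measure_mono_null (Set.compl_subset_compl.2 hsub) (hmwsupp w)
    exact (prob_compl_eq_zero_iff (measurableSet_Yword hfm u hadm)).1 hz
  · rw [if_neg h1]
    by_cases h2 : w.1 <+: u
    · rw [if_pos h2]
      obtain ⟨t, ht⟩ := h2
      have hdrop : u.drop w.1.length = t := by rw [← ht, List.drop_left]
      rw [hdrop, ← ht, Yword_append]
      have hinter : mw w (Yword f w.1 ∩ (indmap f)^[w.1.length] ⁻¹' Yword f t)
          = mw w ((indmap f)^[w.1.length] ⁻¹' Yword f t) := by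
        rw [Set.inter_comm]
        exact measure_inter_conull (hmwsupp w)
      have hadmt : Adm f t := by
        intro s hs
        apply hadm s
        rw [← ht]
        exact List.mem_append.2 (Or.inr hs)
      rw [hinter, ← Measure.map_apply ((measurable_indmap hfm).iterate w.1.length)
        (measurableSet_Yword hfm t hadmt), hmwpush w]
      rw [hdis]
    · rw [if_neg h2]
      have hdisj := Yword_disjoint hadm w.2.2 h1 h2
      apply measure_mono_null _ (hmwsupp w)
      intro y hy hyc
      have : y ∈ Yword f u ∩ Yword f w.1 := ⟨hy, hyc⟩
      rw [hdisj] at this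
      exact this

end PCL
namespace PCL

variable {f : ℝ → ℝ} {PA : Words f → ℝ≥0∞} {PΩ : Measure (ℕ → MCState f)}

lemma measurableSet_pair_set (A : Set (MCState f × MCState f)) : MeasurableSet A := by
  haveI := countable_mcstate f
  haveI : MeasurableSingletonClass (MCState f) := ⟨fun _ => measurableSet_mcstate _⟩
  exact (Set.to_countable A).measurableSet

lemma measurableSet_traj : MeasurableSet (mcTraj f) := by
  have he : mcTraj f = ⋂ n : ℕ, (fun x : ℕ → MCState f => (x n, x (n + 1)))
      ⁻¹' {p : MCState f × MCState f | mcAdm f p.1 p.2} := by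
    ext x
    simp only [mcTraj, Set.mem_setOf_eq, Set.mem_iInter, Set.mem_preimage]
  rw [he]
  exact MeasurableSet.iInter fun n =>
    ((measurable_pi_apply n).prodMk (measurable_pi_apply (n + 1)))
      (measurableSet_pair_set _)

lemma Ew_base {w : Words f} {x : ℕ → MCState f} (hx : x ∈ Ew w) : x 0 = baseSt w := by
  have := hx 0 (Nat.zero_le _)
  rw [this, towerSt_zero]

lemma decomp (hsupp : PΩ (mcTraj f)ᶜ = 0) (S : Set (ℕ → MCState f))
    (hS : MeasurableSet S) :
    PΩ (S ∩ Bev f) = ∑' w : Words f, PΩ (S ∩ Ew w) := by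
  haveI := countable_words f
  have h1 : PΩ (S ∩ Bev f) = PΩ ((S ∩ Bev f) ∩ mcTraj f) :=
    (measure_inter_conull hsupp).symm
  have h2 : (S ∩ Bev f) ∩ mcTraj f = ⋃ w : Words f, (S ∩ Ew w ∩ mcTraj f) := by
    ext x
    constructor
    · rintro ⟨⟨hxS, hxB⟩, hxT⟩
      have h00 : x 0 = baseSt (wordOf (x 0)) := stateEq _ _ rfl hxB
      refine Set.mem_iUnion.2 ⟨wordOf (x 0), ⟨hxS, ?_⟩, hxT⟩
      intro k hk
      apply (forcing hxT _ h00).1 k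
      have := hof_pos (wordOf (x 0)).2.1 (wordOf (x 0)).2.2
      omega
    · intro hx
      obtain ⟨w, ⟨hxS, hxE⟩, hxT⟩ := Set.mem_iUnion.1 hx
      exact ⟨⟨hxS, Ew_subset_Bev w hxE⟩, hxT⟩
  rw [h1, h2, measure_iUnion ?_ ?_]
  · apply tsum_congr
    intro w
    exact measure_inter_conull hsupp
  · intro w w' hww
    rw [Function.onFun, Set.disjoint_left]
    rintro x ⟨⟨_, hxE⟩, _⟩ ⟨⟨_, hxE'⟩, _⟩
    exact hww (baseSt_inj ((Ew_base hxE) ▸ (Ew_base hxE')))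
  · intro w
    exact (hS.inter (measurableSet_Ew w)).inter measurableSet_traj

lemma renewal_p (hfm : Measurable f) (hcyl : HCyl PA PΩ) [IsProbabilityMeasure PΩ]
    (hPAsum : ∑' w : Words f, PA w = 1)
    (hsupp : PΩ (mcTraj f)ᶜ = 0)
    {π : (ℕ → MCState f) → ℝ} (hπm : Measurable π)
    (hπ : ∀ x ∈ mcTraj f, ∀ n : ℕ, f^[n] (π x) ∈ mcX f (x n))
    {lam : ℝ} (hlam : 1 < lam)
    (hexp : ∀ a ∈ partAlpha f, ∀ x ∈ a, ∀ y ∈ a,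
      lam * |x - y| ≤ |indmap f x - indmap f y|)
    (u : List (Set ℝ)) (hadm : Adm f u) :
    Etot f PA * PΩ (π ⁻¹' Yword f u ∩ Bev f)
      = branch f PA (fun v => Etot f PA * PΩ (π ⁻¹' Yword f v ∩ Bev f)) u := by
  haveI := countable_words f
  have hE0 := Etot_ne_zero (f := f) hPAsum
  have hEtop := Etot_ne_top hcyl
  have hYum := measurableSet_Yword hfm u hadm
  have hSm : MeasurableSet (π ⁻¹' Yword f u) := hπm hYum
  rw [decomp hsupp _ hSm, branch, ← ENNReal.tsum_mul_left]
  apply tsum_congr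
  intro w
  have hπx0 : ∀ x ∈ Ew w, x ∈ mcTraj f → π x ∈ Yword f w.1 := by
    intro x hxE hxT
    have h00 : x 0 = baseSt w := Ew_base hxE
    have := hπ x hxT 0
    rw [Function.iterate_zero, id_eq, h00, mcX_base] at this
    exact this
  by_cases h1 : u <+: w.1
  · rw [if_pos h1, mul_one]
    have hset : PΩ (π ⁻¹' Yword f u ∩ Ew w) = PΩ (Ew w) := by
      apply le_antisymm (measure_mono Set.inter_subset_right)
      calc PΩ (Ew w) = PΩ (Ew w ∩ mcTraj f) := (measure_inter_conull hsupp).symm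
        _ ≤ PΩ (π ⁻¹' Yword f u ∩ Ew w) := by
            apply measure_mono
            rintro x ⟨hxE, hxT⟩
            exact ⟨Yword_mono h1 (hπx0 x hxE hxT), hxE⟩
    rw [hset, PΩ_Ew hcyl w, div_eq_mul_inv, mul_comm (PA w), ← mul_assoc,
      ENNReal.mul_inv_cancel hE0 hEtop, one_mul]
  · rw [if_neg h1]
    by_cases h2 : w.1 <+: u
    · rw [if_pos h2]
      obtain ⟨t, ht⟩ := h2
      have hdrop : u.drop w.1.length = t := by rw [← ht, List.drop_left]
      rw [hdrop]
      have hadmt : Adm f t := by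
        intro s hs
        apply hadm s
        rw [← ht]
        exact List.mem_append.2 (Or.inr hs)
      set H := hof f w.1 with hH
      have hYtm := measurableSet_Yword hfm t hadmt
      have key : ∀ x, x ∈ Ew w → x ∈ mcTraj f → π (shiftT f H x) = f^[H] (π x) := by
        intro x hxE hxT
        have h00 : x 0 = baseSt w := Ew_base hxE
        have hshiftT := shift_mem_traj hxT H
        have hlev0 : levOf (shiftT f H x 0) = 0 := by
          show levOf (x (0 + H)) = 0
          rw [Nat.zero_add]
          exact (forcing hxT w h00).2
        apply proj_unique hlam hexp hshiftT hlev0 (hπ _ hshiftT)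
        intro n
        rw [← Function.iterate_add_apply]
        exact hπ x hxT (n + H)
      have hset : π ⁻¹' Yword f u ∩ Ew w ∩ mcTraj f
          = shiftT f H ⁻¹' (π ⁻¹' Yword f t) ∩ Ew w ∩ mcTraj f := by
        ext x
        simp only [Set.mem_inter_iff, Set.mem_preimage]
        constructor
        · rintro ⟨⟨hxu, hxE⟩, hxT⟩
          refine ⟨⟨?_, hxE⟩, hxT⟩
          rw [key x hxE hxT]
          have hmem : π x ∈ Yword f (w.1 ++ t) := by rw [ht]; exact hxu
          rw [Yword_append] at hmem
          have h5 : (indmap f)^[w.1.length] (π x) ∈ Yword f t := hmem.2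
          rw [iterate_indmap_eq w.2.2 hmem.1] at h5
          exact h5
        · rintro ⟨⟨hxt, hxE⟩, hxT⟩
          refine ⟨⟨?_, hxE⟩, hxT⟩
          rw [key x hxE hxT] at hxt
          rw [← ht, Yword_append]
          refine ⟨hπx0 x hxE hxT, ?_⟩
          show (indmap f)^[w.1.length] (π x) ∈ Yword f t
          rw [iterate_indmap_eq w.2.2 (hπx0 x hxE hxT)]
          exact hxt
      have hπtm : MeasurableSet (π ⁻¹' Yword f t) := hπm hYtm
      calc Etot f PA * PΩ (π ⁻¹' Yword f u ∩ Ew w)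
          = Etot f PA * PΩ (shiftT f H ⁻¹' (π ⁻¹' Yword f t) ∩ Ew w) := by
            rw [← measure_inter_conull (s := π ⁻¹' Yword f u ∩ Ew w) hsupp, hset,
              measure_inter_conull hsupp]
        _ = Etot f PA * (((PΩ.restrict (Ew w)).map (shiftT f H)) (π ⁻¹' Yword f t)) := by
            rw [Measure.map_apply (measurable_shiftT H) hπtm,
              Measure.restrict_apply (measurable_shiftT H hπtm)]
        _ = Etot f PA * (PA w * PΩ (π ⁻¹' Yword f t ∩ Bev f)) := by
            rw [markov hcyl hPAsum w, Measure.smul_apply, smul_eq_mul,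
              Measure.restrict_apply hπtm]
        _ = PA w * (Etot f PA * PΩ (π ⁻¹' Yword f t ∩ Bev f)) := by ring
    · rw [if_neg h2, mul_zero]
      have hset : π ⁻¹' Yword f u ∩ Ew w ∩ mcTraj f = ∅ := by
        ext x
        simp only [Set.mem_inter_iff, Set.mem_preimage, Set.mem_empty_iff_false, iff_false]
        rintro ⟨⟨hxu, hxE⟩, hxT⟩
        have hdisj := Yword_disjoint hadm w.2.2 h1 h2
        have : π x ∈ Yword f u ∩ Yword f w.1 := ⟨hxu, hπx0 x hxE hxT⟩
        rw [hdisj] at this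
        exact this
      rw [← measure_inter_conull (s := π ⁻¹' Yword f u ∩ Ew w) hsupp, hset,
        measure_empty, mul_zero]

end PCL
namespace PCL

variable {f : ℝ → ℝ} {PA : Words f → ℝ≥0∞} {PΩ : Measure (ℕ → MCState f)}

lemma p_eq_q (hfm : Measurable f) (hcyl : HCyl PA PΩ) [IsProbabilityMeasure PΩ]
    (hPAsum : ∑' w : Words f, PA w = 1)
    (hsupp : PΩ (mcTraj f)ᶜ = 0)
    {π : (ℕ → MCState f) → ℝ} (hπm : Measurable π)
    (hπ : ∀ x ∈ mcTraj f, ∀ n : ℕ, f^[n] (π x) ∈ mcX f (x n))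
    {lam : ℝ} (hlam : 1 < lam)
    (hexp : ∀ a ∈ partAlpha f, ∀ x ∈ a, ∀ y ∈ a,
      lam * |x - y| ≤ |indmap f x - indmap f y|)
    {mw : Words f → Measure ℝ}
    (hdis : mY = Measure.sum fun w : Words f => PA w • mw w)
    (hmwp : ∀ w : Words f, IsProbabilityMeasure (mw w))
    (hmwsupp : ∀ w : Words f, mw w (Yword f w.1)ᶜ = 0)
    (hmwpush : ∀ w : Words f, (mw w).map ((indmap f)^[w.1.length]) = mY) :
    ∀ u : List (Set ℝ), Adm f u →
      Etot f PA * PΩ (π ⁻¹' Yword f u ∩ Bev f) = mY (Yword f u) := by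
  have step : ∀ u : List (Set ℝ),
      (∀ v : List (Set ℝ), v.length < u.length → Adm f v →
        Etot f PA * PΩ (π ⁻¹' Yword f v ∩ Bev f) = mY (Yword f v)) →
      Adm f u →
      Etot f PA * PΩ (π ⁻¹' Yword f u ∩ Bev f) = mY (Yword f u) := by
    intro u IH hadm
    rw [renewal_p hfm hcyl hPAsum hsupp hπm hπ hlam hexp u hadm,
      renewal_q hfm hdis hmwp hmwsupp hmwpush u hadm]
    apply tsum_congr
    intro w
    congr 1
    by_cases h1 : u <+: w.1
    · rw [if_pos h1, if_pos h1]
    · rw [if_neg h1, if_neg h1]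
      by_cases h2 : w.1 <+: u
      · rw [if_pos h2, if_pos h2]
        apply IH
        · rw [List.length_drop]
          have hw1 : 0 < w.1.length := List.length_pos_iff.2 w.2.1
          have hle : w.1.length ≤ u.length := h2.length_le
          have hne : u ≠ [] := by
            intro h
            rw [h] at h1
            exact h1 List.nil_prefix
          have hu1 : 0 < u.length := List.length_pos_iff.2 hne
          omega
        · intro s hs
          exact hadm s (List.mem_of_mem_drop hs)
      · rw [if_neg h2, if_neg h2]
  suffices h : ∀ N : ℕ, ∀ u : List (Set ℝ), u.length ≤ N → Adm f u →
      Etot f PA * PΩ (π ⁻¹' Yword f u ∩ Bev f) = mY (Yword f u) by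
    intro u hadm
    exact h u.length u le_rfl hadm
  intro N
  induction N with
  | zero =>
    intro u hlen hadm
    apply step u _ hadm
    intro v hv _
    omega
  | succ N ih =>
    intro u hlen hadm
    apply step u _ hadm
    intro v hvlt hadmv
    exact ih v (by omega) hadmv

/-- the union of all length-`n` cylinders -/
def Gn (f : ℝ → ℝ) (n : ℕ) : Set ℝ :=
  ⋃ w : {w : Words f // w.1.length = n}, Yword f w.1.1

lemma measurableSet_Gn (hfm : Measurable f) (n : ℕ) : MeasurableSet (Gn f n) := by
  haveI := countable_words f
  exact MeasurableSet.iUnion fun w => measurableSet_Yword hfm _ w.1.2.2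

lemma mY_Gn {mw : Words f → Measure ℝ} (hfm : Measurable f)
    (hdis : mY = Measure.sum fun w : Words f => PA w • mw w)
    (hmwsupp : ∀ w : Words f, mw w (Yword f w.1)ᶜ = 0)
    (hmwpush : ∀ w : Words f, (mw w).map ((indmap f)^[w.1.length]) = mY) :
    ∀ n : ℕ, 1 ≤ n → mY (Gn f n)ᶜ = 0 := by
  intro n
  induction n using Nat.strong_induction_on with
  | _ n IH =>
    intro hn1
    rw [hdis, Measure.sum_apply _ (measurableSet_Gn hfm n).compl]
    rw [ENNReal.tsum_eq_zero]
    intro w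
    rw [Measure.smul_apply, smul_eq_mul]
    have hmw0 : mw w (Gn f n)ᶜ = 0 := by
      by_cases hlen : n ≤ w.1.length
      · -- the cylinder over `w` is inside a length-`n` cylinder
        have hprefix : Yword f w.1 ⊆ Yword f (w.1.take n) := Yword_mono (List.take_prefix n w.1)
        have htake_len : (w.1.take n).length = n := by
          rw [List.length_take]
          omega
        have htake_ne : w.1.take n ≠ [] := by
          intro h
          rw [h] at htake_len
          simp at htake_len
          omega
        have hsub : Yword f w.1 ⊆ Gn f n := by
          intro y hy
          exact Set.mem_iUnion.2 ⟨⟨⟨w.1.take n, htake_ne,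
            fun s hs => w.2.2 s (List.mem_of_mem_take hs)⟩, htake_len⟩, hprefix hy⟩
        exact measure_mono_null (Set.compl_subset_compl.2 hsub) (hmwsupp w)
      · push_neg at hlen
        set m := w.1.length with hm
        have hm1 : 1 ≤ m := List.length_pos_iff.2 w.2.1
        have hsub : Yword f w.1 ∩ (indmap f)^[m] ⁻¹' Gn f (n - m) ⊆ Gn f n := by
          rintro y ⟨hy1, hy2⟩
          obtain ⟨v, hv⟩ := Set.mem_iUnion.1 hy2
          refine Set.mem_iUnion.2 ⟨⟨⟨w.1 ++ v.1.1, ?_, ?_⟩, ?_⟩, ?_⟩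
          · simp [w.2.1]
          · intro s hs
            rcases List.mem_append.1 hs with h | h
            · exact w.2.2 s h
            · exact v.1.2.2 s h
          · rw [List.length_append, v.2]
            omega
          · rw [Yword_append]
            exact ⟨hy1, hv⟩
        have hcover : (Gn f n)ᶜ ⊆ (Yword f w.1)ᶜ ∪ (indmap f)^[m] ⁻¹' (Gn f (n - m))ᶜ := by
          intro y hy
          by_cases hy1 : y ∈ Yword f w.1
          · right
            intro hy2
            exact hy (hsub ⟨hy1, hy2⟩)
          · left; exact hy1
        apply measure_mono_null hcover
        apply le_antisymm _ (by simp)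
        calc mw w ((Yword f w.1)ᶜ ∪ (indmap f)^[m] ⁻¹' (Gn f (n - m))ᶜ)
            ≤ mw w (Yword f w.1)ᶜ + mw w ((indmap f)^[m] ⁻¹' (Gn f (n - m))ᶜ) :=
              measure_union_le _ _
          _ = 0 := by
              rw [hmwsupp w, zero_add,
                ← Measure.map_apply ((measurable_indmap hfm).iterate m)
                  (measurableSet_Gn hfm (n - m)).compl, hmwpush w]
              exact IH (n - m) (by omega) (by omega)
    rw [hmw0, mul_zero]

lemma proj_mem_Gn {π : (ℕ → MCState f) → ℝ}
    (hπ : ∀ x ∈ mcTraj f, ∀ n : ℕ, f^[n] (π x) ∈ mcX f (x n))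
    {x : ℕ → MCState f} (hxT : x ∈ mcTraj f) (hx0 : levOf (x 0) = 0)
    {n : ℕ} (hn : 1 ≤ n) : π x ∈ Gn f n := by
  obtain ⟨u, hadm, hlen, hall⟩ := itin n x hxT hx0
  have hyu : π x ∈ Yword f u := hall (π x) (hπ x hxT)
  have htake_len : (u.take n).length = n := by
    rw [List.length_take]
    omega
  have htake_ne : u.take n ≠ [] := by
    intro h
    rw [h] at htake_len
    simp at htake_len
    omega
  exact Set.mem_iUnion.2 ⟨⟨⟨u.take n, htake_ne,
    fun s hs => hadm s (List.mem_of_mem_take hs)⟩, htake_len⟩,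
    Yword_mono (List.take_prefix n u) hyu⟩

end PCL
namespace PCL

lemma mY_univ : mY Set.univ = 1 := by
  rw [mY, Measure.smul_apply, smul_eq_mul, Measure.restrict_apply_univ]
  have hv : volume Yset = ENNReal.ofReal (1 / 2) := by
    rw [Yset, Real.volume_Ioc]
    norm_num
  rw [hv]
  refine ENNReal.inv_mul_cancel ?_ ENNReal.ofReal_ne_top
  rw [Ne, ENNReal.ofReal_eq_zero]
  norm_num

end PCL

/-- **The projection sends the conditioned chain measure to the reference measure**
(Proposition 2.7). Let `Ω₀ = {(g₀, g₁, …) ∈ Ω : g₀ ∈ S₀}` and let `P_{Ω₀}` be `P_Ω`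
conditioned on `Ω₀`. Then `π_* P_{Ω₀} = m`, the normalized Lebesgue measure on `Y`. -/
theorem projection_conditioned_law
    (γ : ℝ) (hγ0 : 0 < γ) (hγ1 : γ < 1)
    (f : ℝ → ℝ) (hf : IsLSV γ f ∨ IsHG γ f) (hfm : Measurable f)
    (PA : Words f → ℝ≥0∞) (mw : Words f → Measure ℝ)
    (hPAsum : ∑' w : Words f, PA w = 1) (hPApos : ∀ w, 0 < PA w)
    (hdis : mY = Measure.sum fun w : Words f => PA w • mw w)
    (hmwp : ∀ w : Words f, IsProbabilityMeasure (mw w))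
    (hmwsupp : ∀ w : Words f, mw w (Yword f w.1)ᶜ = 0)
    (hmwpush : ∀ w : Words f, (mw w).map ((indmap f)^[w.1.length]) = mY)
    (lam : ℝ) (hlam : 1 < lam)
    (hexp : ∀ a ∈ partAlpha f, ∀ x ∈ a, ∀ y ∈ a,
      lam * |x - y| ≤ |indmap f x - indmap f y|)
    (PΩ : Measure (ℕ → MCState f)) [IsProbabilityMeasure PΩ]
    (hcyl : ∀ (n : ℕ) (x : ℕ → MCState f),
      PΩ {y | ∀ k ≤ n, y k = x k}
        = mcNu f PA (x 0) * ∏ k ∈ Finset.range n, mcTrans f PA (x k) (x (k + 1)))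
    (hsupp : PΩ (mcTraj f)ᶜ = 0)
    (π : (ℕ → MCState f) → ℝ) (hπm : Measurable π)
    (hπ : ∀ x ∈ mcTraj f, ∀ n : ℕ, f^[n] (π x) ∈ mcX f (x n))
    :
    ((PΩ {x | x 0 ∈ mcBase f})⁻¹ • PΩ.restrict {x | x 0 ∈ mcBase f}).map π = mY := by
  classical
  haveI := PCL.countable_words f
  have hcyl' : PCL.HCyl PA PΩ := hcyl
  have hE0 := PCL.Etot_ne_zero (f := f) hPAsum
  have hEtop := PCL.Etot_ne_top hcyl'
  have hPB : PΩ {x | x 0 ∈ mcBase f} = (PCL.Etot f PA)⁻¹ := PCL.PΩ_Bev hcyl' hPAsum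
  rw [hPB, inv_inv]
  show ((PCL.Etot f PA) • PΩ.restrict (PCL.Bev f)).map π = mY
  set μ := ((PCL.Etot f PA) • PΩ.restrict (PCL.Bev f)).map π with hμdef
  have hμapp : ∀ A : Set ℝ, MeasurableSet A →
      μ A = PCL.Etot f PA * PΩ (π ⁻¹' A ∩ PCL.Bev f) := by
    intro A hA
    rw [hμdef, Measure.map_apply hπm hA, Measure.smul_apply, smul_eq_mul,
      Measure.restrict_apply (hπm hA)]
  have hpq : ∀ u : List (Set ℝ), PCL.Adm f u → μ (Yword f u) = mY (Yword f u) := by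
    intro u hadm
    rw [hμapp _ (PCL.measurableSet_Yword hfm u hadm)]
    exact PCL.p_eq_q hfm hcyl' hPAsum hsupp hπm hπ hlam hexp hdis hmwp hmwsupp hmwpush u hadm
  have hμG : ∀ n : ℕ, 1 ≤ n → μ (PCL.Gn f n)ᶜ = 0 := by
    intro n hn
    rw [hμapp _ (PCL.measurableSet_Gn hfm n).compl]
    have hempty : π ⁻¹' (PCL.Gn f n)ᶜ ∩ PCL.Bev f ∩ mcTraj f = ∅ := by
      ext x
      simp only [Set.mem_inter_iff, Set.mem_preimage, Set.mem_compl_iff,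
        Set.mem_empty_iff_false, iff_false]
      rintro ⟨⟨hxG, hxB⟩, hxT⟩
      exact hxG (PCL.proj_mem_Gn hπ hxT hxB hn)
    rw [← measure_inter_conull (s := π ⁻¹' (PCL.Gn f n)ᶜ ∩ PCL.Bev f) hsupp, hempty,
      measure_empty, mul_zero]
  have hmYG : ∀ n : ℕ, 1 ≤ n → mY (PCL.Gn f n)ᶜ = 0 :=
    PCL.mY_Gn hfm hdis hmwsupp hmwpush
  have hGbig : ∀ ν : Measure ℝ, (∀ n : ℕ, 1 ≤ n → ν (PCL.Gn f n)ᶜ = 0) →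
      ν (⋂ n : ℕ, PCL.Gn f (n + 1))ᶜ = 0 := by
    intro ν hν
    rw [Set.compl_iInter]
    exact measure_iUnion_null fun n => hν (n + 1) (by omega)
  -- equality on open sets
  have hopen : ∀ U : Set ℝ, IsOpen U → μ U = mY U := by
    intro U hU
    set M := {w : Words f | Yword f w.1 ⊆ U ∧
      ∀ v : Words f, v.1 <+: w.1 → v ≠ w → ¬ (Yword f v.1 ⊆ U)} with hM
    set D := ⋃ w : {w : Words f // w ∈ M}, Yword f w.1.1 with hD
    have hDU : D ⊆ U := by
      intro y hy
      obtain ⟨w, hw⟩ := Set.mem_iUnion.1 hy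
      exact w.2.1 hw
    have hinv0 : (0:ℝ) ≤ lam⁻¹ := by positivity
    have hinv1 : lam⁻¹ < 1 := by
      rw [inv_lt_one_iff₀]
      right; exact hlam
    have hcover : U ∩ (⋂ n : ℕ, PCL.Gn f (n + 1)) ⊆ D := by
      rintro y ⟨hyU, hyG⟩
      obtain ⟨ε, hε, hball⟩ := Metric.isOpen_iff.1 hU y hyU
      obtain ⟨n0, hn0⟩ := exists_pow_lt_of_lt_one hε hinv1
      set n := n0 + 1 with hn
      have hyGn : y ∈ PCL.Gn f n := Set.mem_iInter.1 hyG n0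
      obtain ⟨w, hw⟩ := Set.mem_iUnion.1 hyGn
      have hwne : w.1.1 ≠ [] := w.1.2.1
      have hsubU : Yword f w.1.1 ⊆ U := by
        intro z hz
        apply hball
        rw [Metric.mem_ball, Real.dist_eq]
        have hd := PCL.diam_Yword hlam hexp w.1.1 w.1.2.2 hwne z hz y hw
        calc |z - y| ≤ 1 / 2 * lam⁻¹ ^ (w.1.1.length - 1) := hd
          _ = 1 / 2 * lam⁻¹ ^ n0 := by rw [w.2, hn, Nat.add_sub_cancel]
          _ ≤ lam⁻¹ ^ n0 := by nlinarith [pow_nonneg hinv0 n0]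
          _ < ε := hn0
      set L := {ℓ : ℕ | 1 ≤ ℓ ∧ ℓ ≤ n ∧ Yword f (w.1.1.take ℓ) ⊆ U} with hL
      have hnL : n ∈ L := by
        refine ⟨by omega, le_rfl, ?_⟩
        rw [List.take_of_length_le (le_of_eq w.2)]
        exact hsubU
      have hL0 := Nat.sInf_mem (⟨n, hnL⟩ : L.Nonempty)
      set ℓ0 := sInf L with hℓ0
      have htakelen : (w.1.1.take ℓ0).length = ℓ0 := by
        rw [List.length_take]
        have h1 := hL0.2.1
        have h2 := w.2
        omega
      have htakene : w.1.1.take ℓ0 ≠ [] := by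
        intro h
        rw [h] at htakelen
        have := hL0.1
        simp at htakelen
        omega
      set w' : Words f := ⟨w.1.1.take ℓ0, htakene,
        fun s hs => w.1.2.2 s (List.mem_of_mem_take hs)⟩ with hw'
      have hw'M : w' ∈ M := by
        refine ⟨hL0.2.2, ?_⟩
        intro v hpre hne hvU
        have hvlen : v.1.length < ℓ0 := by
          have h1 : v.1.length ≤ ℓ0 := by
            have := hpre.length_le
            rw [show (w'.1).length = ℓ0 from htakelen] at this
            exact this
          rcases Nat.lt_or_ge v.1.length ℓ0 with h | h
          · exact h
          · exfalso
            have hlen_eq : v.1.length = ℓ0 := le_antisymm h1 h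
            have hveq : v.1 = w'.1 := hpre.eq_of_length (hlen_eq.trans htakelen.symm)
            exact hne (Subtype.ext hveq)
        have hpre2 : v.1 <+: w.1.1 := hpre.trans (List.take_prefix ℓ0 w.1.1)
        obtain ⟨t, ht⟩ := hpre2
        have htakeeq : w.1.1.take v.1.length = v.1 := by
          rw [← ht]
          exact List.take_left
        have hvL : v.1.length ∈ L := by
          refine ⟨List.length_pos_iff.2 v.2.1, le_of_lt (lt_of_lt_of_le hvlen hL0.2.1), ?_⟩
          rw [htakeeq]
          exact hvU
        have hcontra := Nat.sInf_le hvL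
        exact absurd hvlen (not_lt.2 hcontra)
      exact Set.mem_iUnion.2 ⟨⟨w', hw'M⟩,
        PCL.Yword_mono (List.take_prefix ℓ0 w.1.1) hw⟩
    have hdisj : Pairwise (Function.onFun Disjoint
        (fun w : {w : Words f // w ∈ M} => Yword f w.1.1)) := by
      intro w w' hww
      rw [Function.onFun, Set.disjoint_left]
      intro y hy hy'
      have hne : w.1 ≠ w'.1 := fun h => hww (Subtype.ext h)
      by_cases h1 : w.1.1 <+: w'.1.1
      · exact absurd w.2.1 (w'.2.2 w.1 h1 hne)
      · by_cases h2 : w'.1.1 <+: w.1.1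
        · exact absurd w'.2.1 (w.2.2 w'.1 h2 (Ne.symm hne))
        · have hd := PCL.Yword_disjoint w.1.2.2 w'.1.2.2 h1 h2
          have : y ∈ Yword f w.1.1 ∩ Yword f w'.1.1 := ⟨hy, hy'⟩
          rw [hd] at this
          exact this
    have hDμ : μ D = ∑' w : {w : Words f // w ∈ M}, μ (Yword f w.1.1) :=
      measure_iUnion hdisj (fun w => PCL.measurableSet_Yword hfm _ w.1.2.2)
    have hDmY : mY D = ∑' w : {w : Words f // w ∈ M}, mY (Yword f w.1.1) :=
      measure_iUnion hdisj (fun w => PCL.measurableSet_Yword hfm _ w.1.2.2)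
    have hUsub : ∀ ν : Measure ℝ, ν (⋂ n : ℕ, PCL.Gn f (n + 1))ᶜ = 0 → ν U = ν D := by
      intro ν hν
      apply le_antisymm _ (measure_mono hDU)
      calc ν U ≤ ν (D ∪ (⋂ n : ℕ, PCL.Gn f (n + 1))ᶜ) := by
            apply measure_mono
            intro y hy
            by_cases hyG : y ∈ ⋂ n : ℕ, PCL.Gn f (n + 1)
            · exact Or.inl (hcover ⟨hy, hyG⟩)
            · exact Or.inr hyG
        _ ≤ ν D + ν (⋂ n : ℕ, PCL.Gn f (n + 1))ᶜ := measure_union_le _ _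
        _ = ν D := by rw [hν, add_zero]
    rw [hUsub μ (hGbig μ hμG), hUsub mY (hGbig mY hmYG), hDμ, hDmY]
    exact tsum_congr (fun w => hpq _ w.1.2.2)
  -- conclude by the π-system of open sets
  haveI : IsFiniteMeasure μ := by
    constructor
    rw [hμapp Set.univ MeasurableSet.univ, Set.preimage_univ, Set.univ_inter]
    exact ENNReal.mul_lt_top (lt_top_iff_ne_top.2 hEtop) (measure_lt_top _ _)
  haveI : IsFiniteMeasure mY := by
    constructor
    rw [PCL.mY_univ]
    exact ENNReal.one_lt_top
  have hgen : (inferInstance : MeasurableSpace ℝ)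
      = MeasurableSpace.generateFrom {s : Set ℝ | IsOpen s} :=
    (BorelSpace.measurable_eq (α := ℝ)).trans rfl
  apply MeasureTheory.ext_of_generate_finite {s : Set ℝ | IsOpen s} hgen isPiSystem_isOpen
    (fun s hs => hopen s hs)
  rw [hμapp Set.univ MeasurableSet.univ, Set.preimage_univ, Set.univ_inter]
  have hB : PΩ (PCL.Bev f) = (PCL.Etot f PA)⁻¹ := hPB
  rw [hB, PCL.mY_univ]
  exact ENNReal.mul_inv_cancel hE0 hEtop
end

section
/- Suppose the return times of f have a weak polynomial moment of order β. Then, on the probability space (Y, μ_Y), max_{k≤n} τ∘F^k = o(n^{1/β} (log n)^{1/β + ε}) almost surely for every ε > 0. If instead the return times have a strong polynomial moment of order β, then max_{k≤n} τ∘F^k = o(n^{1/β}) almost surely. -/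
open MeasureTheory ProbabilityTheory Filter Asymptotics
open scoped ENNReal NNReal

/-- A nonuniformly expanding dynamical system on a metric measurable space `X`:
a map `f` with an inducing scheme over a closed reference set `Y` with reference
probability measure `m`, a countable partition `part` of `Y` (mod `m`), a return time
`τ` constant on partition elements, and an induced map `F = f^τ` which is uniformly
expanding with bounded distortion; together with the absolutely continuous
`F`-invariant measure `μY` on `Y` and the corresponding `f`-invariant measure `μ`. -/
structure NUESystem (X : Type*) [MetricSpace X] [MeasurableSpace X] : Type _ where
  f : X → X
  hfm : Measurable f
  Y : Set X
  hYclosed : IsClosed Y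
  m : Measure X
  hmprob : IsProbabilityMeasure m
  hmY : m Yᶜ = 0
  part : Set (Set X)
  hpartCount : part.Countable
  hpartSub : ∀ a ∈ part, a ⊆ Y
  hpartMeas : ∀ a ∈ part, MeasurableSet a
  hpartPos : ∀ a ∈ part, 0 < m a
  hpartDisj : ∀ a ∈ part, ∀ b ∈ part, a ≠ b → m (a ∩ b) = 0
  hpartCover : m (Y \ ⋃₀ part) = 0
  τ : X → ℕ
  hτm : Measurable τ
  hτpos : ∀ x ∈ Y, 1 ≤ τ x
  hτconst : ∀ a ∈ part, ∀ x ∈ a, ∀ y ∈ a, τ x = τ y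
  hτret : ∀ a ∈ part, ∀ x ∈ a, f^[τ x] x ∈ Y
  hτint : ∫⁻ x, (τ x : ℝ≥0∞) ∂m < ⊤
  κ : ℝ
  K : ℝ
  ηe : ℝ
  hκ : 1 < κ
  hK : 0 < K
  hηe : 0 < ηe ∧ ηe ≤ 1
  hbij : ∀ a ∈ part, Set.BijOn (fun x => f^[τ x] x) a Y
  hnonsing : ∀ a ∈ part, ∀ s : Set X, MeasurableSet s → s ⊆ a →
    (m s = 0 ↔ m ((fun x => f^[τ x] x) '' s) = 0)
  hexp : ∀ a ∈ part, ∀ x ∈ a, ∀ y ∈ a, κ * dist x y ≤ dist (f^[τ x] x) (f^[τ y] y)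
  hcomp : ∀ a ∈ part, ∀ x ∈ a, ∀ y ∈ a, ∀ k ≤ τ x,
    dist (f^[k] x) (f^[k] y) ≤ K * dist (f^[τ x] x) (f^[τ y] y)
  ζ : Set X → X → ℝ
  hζpos : ∀ a ∈ part, ∀ x ∈ a, 0 < ζ a x
  hζjac : ∀ a ∈ part, ∀ s : Set X, MeasurableSet s → s ⊆ a →
    m ((fun x => f^[τ x] x) '' s) = ∫⁻ x in s, ENNReal.ofReal (ζ a x)⁻¹ ∂m
  hζdist : ∀ a ∈ part, ∀ x ∈ a, ∀ y ∈ a,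
    |Real.log (ζ a x) - Real.log (ζ a y)| ≤ K * dist (f^[τ x] x) (f^[τ y] y) ^ ηe
  hclosure : ∀ w : List (Set X), (∀ a ∈ w, a ∈ part) →
    m {x | ∀ k < w.length, (fun y => f^[τ y] y)^[k] x ∈ w.getD k ∅}
      = m (closure {x | ∀ k < w.length, (fun y => f^[τ y] y)^[k] x ∈ w.getD k ∅})
  μY : Measure X
  hμYprob : IsProbabilityMeasure μY
  hμYsupp : μY Yᶜ = 0
  hμYinv : μY.map (fun x => f^[τ x] x) = μY
  hμYdens : ∃ c : ℝ≥0∞, 0 < c ∧ c < ⊤ ∧ ∀ s : Set X, μY s ≤ c * m s ∧ m s ≤ c * μY s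
  μ : Measure X
  hμprob : IsProbabilityMeasure μ
  hμinv : μ.map f = μ
  hμdef : μ = (∫⁻ x, (τ x : ℝ≥0∞) ∂μY)⁻¹ •
    Measure.sum fun j : ℕ => (μY.restrict {x | x ∈ Y ∧ j < τ x}).map (f^[j])

/-- The induced map `F = f^τ` of a nonuniformly expanding system. -/
def NUESystem.F {X : Type*} [MetricSpace X] [MeasurableSpace X]
    (sys : NUESystem X) (x : X) : X :=
  sys.f^[sys.τ x] x

/-- The return times of the system have a weak polynomial moment of order `β`:
`m(τ ≥ n) = O(n^{-β})`. -/
def NUESystem.WeakMoment {X : Type*} [MetricSpace X] [MeasurableSpace X]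
    (sys : NUESystem X) (β : ℝ) : Prop :=
  ∃ C : ℝ, 0 < C ∧ ∀ n : ℕ, 1 ≤ n →
    sys.m {x | x ∈ sys.Y ∧ n ≤ sys.τ x} ≤ ENNReal.ofReal (C * (n : ℝ) ^ (-β))

/-- The return times of the system have a strong polynomial moment of order `β`:
`∫ τ^β dm < ∞`. -/
def NUESystem.StrongMoment {X : Type*} [MetricSpace X] [MeasurableSpace X]
    (sys : NUESystem X) (β : ℝ) : Prop :=
  ∫⁻ x, (sys.τ x : ℝ≥0∞) ^ β ∂sys.m < ⊤


lemma summable_aux {p : ℝ} (hp : 1 < p) :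
    Summable (fun n : ℕ => (((max n 3 : ℕ) : ℝ) * Real.log ((max n 3 : ℕ) : ℝ) ^ p)⁻¹) := by
  set f : ℕ → ℝ := fun n => (((max n 3 : ℕ) : ℝ) * Real.log ((max n 3 : ℕ) : ℝ) ^ p)⁻¹ with hf
  have hlog : ∀ n : ℕ, 1 ≤ Real.log ((max n 3 : ℕ) : ℝ) := by
    intro n
    have h3 : (3 : ℝ) ≤ ((max n 3 : ℕ) : ℝ) := by exact_mod_cast le_max_right n 3
    have he : Real.exp 1 ≤ 3 := by
      have := Real.exp_one_lt_d9
      linarith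
    calc (1 : ℝ) = Real.log (Real.exp 1) := (Real.log_exp 1).symm
      _ ≤ Real.log 3 := Real.log_le_log (Real.exp_pos 1) he
      _ ≤ _ := Real.log_le_log (by norm_num) h3
  have h0 : ∀ n, 0 ≤ f n := by
    intro n
    apply inv_nonneg.2
    apply mul_nonneg (Nat.cast_nonneg _)
    exact Real.rpow_nonneg (le_trans zero_le_one (hlog n)) p
  have hmono : ∀ ⦃m n : ℕ⦄, 0 < m → m ≤ n → f n ≤ f m := by
    intro m n _ hmn
    have hcastle : ((max m 3 : ℕ) : ℝ) ≤ ((max n 3 : ℕ) : ℝ) := by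
      exact_mod_cast max_le_max hmn (le_refl 3)
    apply inv_anti₀
    · apply mul_pos
      · exact_mod_cast Nat.lt_of_lt_of_le (by norm_num) (le_max_right m 3)
      · exact Real.rpow_pos_of_pos (lt_of_lt_of_le one_pos (hlog m)) p
    · apply mul_le_mul hcastle
      · apply Real.rpow_le_rpow (le_trans zero_le_one (hlog m))
          (Real.log_le_log (by exact_mod_cast Nat.lt_of_lt_of_le (by norm_num) (le_max_right m 3))
            hcastle) (le_trans zero_le_one hp.le)
      · exact Real.rpow_nonneg (le_trans zero_le_one (hlog m)) p
      · exact Nat.cast_nonneg _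
  refine (summable_condensed_iff_of_nonneg h0 hmono).1 ?_
  rw [← summable_nat_add_iff 2]
  have heq : ∀ k : ℕ, (2 : ℝ) ^ (k + 2) * f (2 ^ (k + 2))
      = (Real.log 2 ^ p)⁻¹ * (((k : ℝ) + 2) ^ p)⁻¹ := by
    intro k
    have h32 : (3 : ℕ) ≤ 2 ^ (k + 2) := by
      calc (3:ℕ) ≤ 4 := by norm_num
        _ = 2 ^ 2 := by norm_num
        _ ≤ 2 ^ (k + 2) := Nat.pow_le_pow_right (by norm_num) (by omega)
    have hmax : max (2 ^ (k + 2)) 3 = 2 ^ (k + 2) := max_eq_left h32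
    have hcast : (((2:ℕ) ^ (k + 2) : ℕ) : ℝ) = (2:ℝ) ^ (k + 2) := by push_cast; ring
    have hlog2 : Real.log ((2:ℝ) ^ (k + 2)) = ((k:ℝ) + 2) * Real.log 2 := by
      rw [Real.log_pow]; push_cast; ring
    have hsplit : (((k:ℝ) + 2) * Real.log 2) ^ p = ((k:ℝ) + 2) ^ p * Real.log 2 ^ p :=
      Real.mul_rpow (by positivity) (Real.log_nonneg (by norm_num))
    have hlogpos : (0:ℝ) < Real.log 2 ^ p :=
      Real.rpow_pos_of_pos (Real.log_pos (by norm_num)) p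
    have hkpos : (0:ℝ) < ((k:ℝ) + 2) ^ p := Real.rpow_pos_of_pos (by positivity) p
    have h2pos : (0:ℝ) < (2:ℝ) ^ (k + 2) := by positivity
    rw [hf]
    simp only [hmax, hcast, hlog2, hsplit]
    field_simp
  rw [show (fun k : ℕ => (2:ℝ) ^ (k + 2) * f (2 ^ (k + 2))) =
      (fun k : ℕ => (Real.log 2 ^ p)⁻¹ * (((k : ℝ) + 2) ^ p)⁻¹) from funext heq]
  apply Summable.mul_left
  have : Summable (fun k : ℕ => (((k:ℝ)) ^ p)⁻¹) := Real.summable_nat_rpow_inv.2 hp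
  have h2 := (summable_nat_add_iff 2).2 this
  refine h2.congr fun k => ?_
  push_cast
  ring_nf


lemma layercake_aux {X : Type*} [MeasurableSpace X] (μ : Measure X)
    {g : X → ℝ} (hg : Measurable g) {a : ℝ} (ha : 0 < a) :
    ENNReal.ofReal a * ∑' n : ℕ, μ {x | ((n : ℝ) + 1) * a ≤ g x}
      ≤ ∫⁻ x, ENNReal.ofReal (g x) ∂μ := by
  set s : ℕ → Set X := fun n => {x | ((n : ℝ) + 1) * a ≤ g x} with hs
  have hsm : ∀ n, MeasurableSet (s n) := fun n => measurableSet_le measurable_const hg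
  have h1 : ∀ n : ℕ, ENNReal.ofReal a * μ (s n)
      = ∫⁻ x, (s n).indicator (fun _ => ENNReal.ofReal a) x ∂μ := by
    intro n
    rw [lintegral_indicator_const (hsm n)]
  rw [ENNReal.tsum_mul_left.symm]
  calc ∑' n, ENNReal.ofReal a * μ (s n)
      = ∑' n, ∫⁻ x, (s n).indicator (fun _ => ENNReal.ofReal a) x ∂μ := by
        exact tsum_congr h1
    _ = ∫⁻ x, ∑' n, (s n).indicator (fun _ => ENNReal.ofReal a) x ∂μ := by
        rw [lintegral_tsum (fun n => (measurable_const.indicator (hsm n)).aemeasurable)]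
    _ ≤ ∫⁻ x, ENNReal.ofReal (g x) ∂μ := by
        apply lintegral_mono
        intro x
        set N : ℕ := ⌊g x / a⌋₊ with hN
        have hiff : ∀ n : ℕ, x ∈ s n ↔ n < N := by
          intro n
          rw [hs]
          simp only [Set.mem_setOf_eq]
          rw [← le_div_iff₀ ha]
          constructor
          · intro h
            have h0 : 0 ≤ g x / a := le_trans (by positivity) h
            have := Nat.le_floor (by exact_mod_cast h : ((n + 1 : ℕ) : ℝ) ≤ g x / a)
            omega
          · intro h
            have h' : (n + 1 : ℕ) ≤ N := by omega
            calc ((n : ℝ) + 1) = ((n + 1 : ℕ) : ℝ) := by push_cast; ring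
              _ ≤ (N : ℝ) := by exact_mod_cast h'
              _ ≤ g x / a := by
                  rcases le_or_gt 0 (g x / a) with h0 | h0
                  · exact Nat.floor_le h0
                  · have : N = 0 := Nat.floor_of_nonpos h0.le
                    omega
        have heq : (fun n : ℕ => (s n).indicator (fun _ => ENNReal.ofReal a) x)
            = fun n : ℕ => if n < N then ENNReal.ofReal a else 0 := by
          funext n
          by_cases h : x ∈ s n
          · rw [Set.indicator_of_mem h, if_pos ((hiff n).1 h)]
          · rw [Set.indicator_of_notMem h, if_neg (fun hc => h ((hiff n).2 hc))]
        simp only []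
        rw [show (∑' (n : ℕ), (s n).indicator (fun _ => ENNReal.ofReal a) x)
            = ∑' (n : ℕ), (if n < N then ENNReal.ofReal a else 0) from tsum_congr fun n => congrFun heq n]
        have hts : ∑' n : ℕ, (if n < N then ENNReal.ofReal a else 0)
            = ∑ n ∈ Finset.range N, (if n < N then ENNReal.ofReal a else 0) := by
          apply tsum_eq_sum
          intro n hn
          rw [Finset.mem_range] at hn
          rw [if_neg hn]
        rw [hts]
        have : ∑ n ∈ Finset.range N, (if n < N then ENNReal.ofReal a else 0)
            = (N : ℕ) * ENNReal.ofReal a := by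
          rw [Finset.sum_ite_of_true (fun n hn => Finset.mem_range.1 hn)]
          simp [Finset.sum_const]
        rw [this]
        rcases le_or_gt 0 (g x / a) with h0 | h0
        · have hNle : (N : ℝ) * a ≤ g x := by
            have := Nat.floor_le h0
            calc (N : ℝ) * a ≤ g x / a * a := by
                  apply mul_le_mul_of_nonneg_right this ha.le
              _ = g x := by field_simp
          calc (N : ℕ) * ENNReal.ofReal a = ENNReal.ofReal ((N : ℝ) * a) := by
                rw [ENNReal.ofReal_mul (Nat.cast_nonneg N)]
                simp
            _ ≤ ENNReal.ofReal (g x) := ENNReal.ofReal_le_ofReal hNle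
        · have : N = 0 := Nat.floor_of_nonpos h0.le
          simp [this]

lemma bc_aux {X : Type*} [MeasurableSpace X] (μ : Measure X) [IsProbabilityMeasure μ]
    {e : ℕ → Set X} {g : ℕ → ℝ} (N : ℕ) (hg0 : ∀ n, 0 ≤ g n) (hg : Summable g)
    (hbound : ∀ n, N ≤ n → μ (e n) ≤ ENNReal.ofReal (g n)) :
    ∀ᵐ x ∂μ, ∀ᶠ n in atTop, x ∉ e n := by
  apply ae_eventually_notMem
  rw [← Summable.sum_add_tsum_nat_add' (f := fun n => μ (e n)) (k := N) ENNReal.summable]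
  apply ne_of_lt
  apply ENNReal.add_lt_top.2
  constructor
  · calc ∑ i ∈ Finset.range N, μ (e i) ≤ ∑ i ∈ Finset.range N, 1 :=
        Finset.sum_le_sum fun i _ => prob_le_one
      _ = (N : ℝ≥0∞) := by simp
      _ < ⊤ := by simp
  · calc ∑' n : ℕ, μ (e (n + N)) ≤ ∑' n : ℕ, ENNReal.ofReal (g (n + N)) :=
        ENNReal.tsum_le_tsum fun n => hbound (n + N) (by omega)
      _ = ENNReal.ofReal (∑' n : ℕ, g (n + N)) :=
        (ENNReal.ofReal_tsum_of_nonneg (fun n => hg0 _) ((summable_nat_add_iff N).2 hg)).symm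
      _ < ⊤ := ENNReal.ofReal_lt_top


lemma sup_littleO_aux {u : ℕ → ℕ} {b : ℕ → ℝ} (n0 : ℕ)
    (hb_top : Tendsto b atTop atTop)
    (hb_mono : ∀ m n : ℕ, n0 ≤ m → m ≤ n → b m ≤ b n)
    (h : ∀ j : ℕ, ∀ᶠ n in atTop, (u n : ℝ) ≤ (1 / ((j : ℝ) + 1)) * b n) :
    (fun n : ℕ => (((Finset.range (n + 1)).sup u : ℕ) : ℝ)) =o[atTop] b := by
  rw [isLittleO_iff]
  intro c hc
  obtain ⟨j, hj⟩ := exists_nat_one_div_lt hc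
  obtain ⟨N', hN'⟩ := eventually_atTop.1 (h j)
  set N : ℕ := max N' n0 with hN
  set M : ℕ := (Finset.range (N + 1)).sup u with hM
  have hjpos : (0 : ℝ) < 1 / ((j : ℝ) + 1) := by positivity
  filter_upwards [hb_top.eventually_ge_atTop ((M : ℝ) / c),
    hb_top.eventually_ge_atTop 0, eventually_ge_atTop N] with n hbn1 hbn0 hnN
  have hnorm_b : ‖b n‖ = b n := Real.norm_of_nonneg hbn0
  rw [hnorm_b, Real.norm_of_nonneg (Nat.cast_nonneg _)]
  obtain ⟨k, hk_mem, hk_eq⟩ := Finset.exists_mem_eq_sup (Finset.range (n + 1))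
    ⟨0, Finset.mem_range.2 (Nat.succ_pos n)⟩ u
  rw [hk_eq]
  have hkn : k ≤ n := Nat.lt_succ_iff.1 (Finset.mem_range.1 hk_mem)
  rcases le_or_gt k N with hkN | hkN
  · have : u k ≤ M := Finset.le_sup (Finset.mem_range.2 (Nat.lt_succ_iff.2 hkN))
    calc (u k : ℝ) ≤ (M : ℝ) := by exact_mod_cast this
      _ ≤ c * b n := by
        have := (div_le_iff₀ hc).1 hbn1
        linarith
  · have hk1 : N' ≤ k := le_trans (le_max_left _ _) hkN.le
    have hk2 : n0 ≤ k := le_trans (le_max_right _ _) hkN.le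
    calc (u k : ℝ) ≤ (1 / ((j : ℝ) + 1)) * b k := hN' k hk1
      _ ≤ (1 / ((j : ℝ) + 1)) * b n :=
        mul_le_mul_of_nonneg_left (hb_mono k n hk2 hkn) hjpos.le
      _ ≤ c * b n := mul_le_mul_of_nonneg_right hj.le hbn0

/-- **Growth of returns along orbits of the induced map** (Proposition 4.4).
If the return times of `f` have a weak polynomial moment of order `β`, then
`μ_Y`-almost surely `max_{k ≤ n} τ(F^k x) = o(n^{1/β} (log n)^{1/β+ε})` for every
`ε > 0`; with a strong polynomial moment of order `β`,
`max_{k ≤ n} τ(F^k x) = o(n^{1/β})` almost surely. -/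
theorem max_return_time_growth {X : Type*} [MetricSpace X] [MeasurableSpace X]
    [BorelSpace X] [CompleteSpace X] [TopologicalSpace.SeparableSpace X]
    (hbd : Bornology.IsBounded (Set.univ : Set X))
    (sys : NUESystem X) (β : ℝ) (hβ : 0 < β) :
    (sys.WeakMoment β → ∀ ε : ℝ, 0 < ε →
      ∀ᵐ x ∂sys.μY,
        (fun n : ℕ => ((((Finset.range (n + 1)).sup fun k => sys.τ (sys.F^[k] x) : ℕ)) : ℝ))
          =o[atTop] fun n => (n : ℝ) ^ (1 / β) * (Real.log n) ^ (1 / β + ε)) ∧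
    (sys.StrongMoment β →
      ∀ᵐ x ∂sys.μY,
        (fun n : ℕ => ((((Finset.range (n + 1)).sup fun k => sys.τ (sys.F^[k] x) : ℕ)) : ℝ))
          =o[atTop] fun n => (n : ℝ) ^ (1 / β)) := by
  obtain ⟨c, hc0, hcT, hcd⟩ := sys.hμYdens
  haveI : IsProbabilityMeasure sys.μY := sys.hμYprob
  have hβ' : (0:ℝ) < 1/β := by positivity
  have hβ0 : β ≠ 0 := hβ.ne'
  have hF : Measurable sys.F := by
    have h1 : Measurable fun p : X × ℕ => sys.f^[p.2] p.1 :=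
      measurable_from_prod_countable_left fun j => sys.hfm.iterate j
    exact h1.comp (measurable_id.prodMk sys.hτm)
  have hτR : Measurable fun x => (sys.τ x : ℝ) := measurable_from_top.comp sys.hτm
  have hmap : ∀ n : ℕ, sys.μY.map sys.F^[n] = sys.μY := by
    intro n
    induction n with
    | zero => simp
    | succ n ih =>
      rw [Function.iterate_succ', ← Measure.map_map hF (hF.iterate n), ih]
      exact sys.hμYinv
  have hID : ∀ (n : ℕ) (t : ℝ),
      sys.μY {x | t ≤ (sys.τ (sys.F^[n] x) : ℝ)} = sys.μY {x | t ≤ (sys.τ x : ℝ)} := by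
    intro n t
    have hs : MeasurableSet {x : X | t ≤ (sys.τ x : ℝ)} :=
      measurableSet_le measurable_const hτR
    have h := Measure.map_apply (μ := sys.μY) (hF.iterate n) hs
    rw [hmap n] at h
    exact h.symm
  have hμYle : ∀ s : Set X, sys.μY s ≤ sys.μY (s ∩ sys.Y) := by
    intro s
    calc sys.μY s ≤ sys.μY ((s ∩ sys.Y) ∪ sys.Yᶜ) := measure_mono (fun x hx => by
          by_cases h : x ∈ sys.Y
          · exact Or.inl ⟨hx, h⟩
          · exact Or.inr h)
      _ ≤ sys.μY (s ∩ sys.Y) + sys.μY sys.Yᶜ := measure_union_le _ _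
      _ = sys.μY (s ∩ sys.Y) := by rw [sys.hμYsupp, add_zero]
  constructor
  · -- weak moment case
    intro hW ε hε
    obtain ⟨C, hC, hCb⟩ := hW
    set p : ℝ := 1 + ε * β with hp
    have hp1 : 1 < p := by nlinarith
    have hb_top : Tendsto (fun n : ℕ => (n:ℝ) ^ (1/β) * Real.log n ^ (1/β + ε))
        atTop atTop := by
      apply Tendsto.atTop_mul_atTop₀
      · exact (tendsto_rpow_atTop hβ').comp tendsto_natCast_atTop_atTop
      · exact (tendsto_rpow_atTop (by positivity)).comp
          (Real.tendsto_log_atTop.comp tendsto_natCast_atTop_atTop)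
    have hb_mono : ∀ m n : ℕ, 3 ≤ m → m ≤ n →
        (m:ℝ) ^ (1/β) * Real.log m ^ (1/β + ε) ≤ (n:ℝ) ^ (1/β) * Real.log n ^ (1/β + ε) := by
      intro m n h3 hmn
      have h1m : (1:ℝ) ≤ (m:ℝ) := by exact_mod_cast le_trans (by norm_num) h3
      have hcast : (m:ℝ) ≤ (n:ℝ) := by exact_mod_cast hmn
      have hlogm : 0 ≤ Real.log (m:ℝ) := Real.log_nonneg h1m
      apply mul_le_mul
      · exact Real.rpow_le_rpow (by positivity) hcast hβ'.le
      · exact Real.rpow_le_rpow hlogm (Real.log_le_log (by linarith) hcast) (by positivity)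
      · exact Real.rpow_nonneg hlogm _
      · positivity
    have hall : ∀ j : ℕ, ∀ᵐ x ∂sys.μY, ∀ᶠ n : ℕ in atTop,
        ¬ ((1/((j:ℝ)+1)) * ((n:ℝ) ^ (1/β) * Real.log n ^ (1/β + ε))
            ≤ (sys.τ (sys.F^[n] x) : ℝ)) := by
      intro j
      set δ : ℝ := 1/((j:ℝ)+1) with hδ
      have hδpos : 0 < δ := by positivity
      set b : ℕ → ℝ := fun n => (n:ℝ) ^ (1/β) * Real.log n ^ (1/β + ε) with hbdef
      obtain ⟨N1, hN1⟩ := eventually_atTop.1 (hb_top.eventually_ge_atTop (1/δ))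
      set C'' : ℝ := c.toReal * C * δ ^ (-β) with hC''
      have hC''nn : 0 ≤ C'' := by
        apply mul_nonneg (mul_nonneg ENNReal.toReal_nonneg hC.le)
        exact (Real.rpow_pos_of_pos hδpos _).le
      have hfun_nn : ∀ n : ℕ,
          0 ≤ C'' * (((max n 3 : ℕ) : ℝ) * Real.log ((max n 3 : ℕ) : ℝ) ^ p)⁻¹ := by
        intro n
        apply mul_nonneg hC''nn
        apply inv_nonneg.2
        apply mul_nonneg (Nat.cast_nonneg _)
        apply Real.rpow_nonneg
        apply Real.log_nonneg
        exact_mod_cast le_trans (by norm_num) (le_max_right n 3)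
      have hbc := bc_aux sys.μY
        (e := fun n => {x | δ * b n ≤ (sys.τ (sys.F^[n] x) : ℝ)})
        (g := fun n => C'' * (((max n 3 : ℕ) : ℝ) * Real.log ((max n 3 : ℕ) : ℝ) ^ p)⁻¹)
        (max N1 3) hfun_nn ((summable_aux hp1).mul_left C'') ?_
      · filter_upwards [hbc] with x hx
        filter_upwards [hx] with n hn
        exact hn
      · intro n hn
        have hn3 : 3 ≤ n := le_trans (le_max_right _ _) hn
        have hnN1 : N1 ≤ n := le_trans (le_max_left _ _) hn
        have ht1 : 1 ≤ δ * b n := by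
          have h := hN1 n hnN1
          rw [div_le_iff₀ hδpos] at h
          linarith
        have htpos : (0:ℝ) < δ * b n := lt_of_lt_of_le one_pos ht1
        have h1n : (1:ℝ) ≤ (n:ℝ) := by exact_mod_cast le_trans (by norm_num) hn3
        have hlogn : 0 ≤ Real.log (n:ℝ) := Real.log_nonneg h1n
        have hceil1 : 1 ≤ ⌈δ * b n⌉₊ := Nat.one_le_iff_ne_zero.2 (by
          have := Nat.ceil_pos.2 htpos
          omega)
        have hmax : max n 3 = n := max_eq_left hn3
        calc sys.μY {x | δ * b n ≤ (sys.τ (sys.F^[n] x) : ℝ)}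
            = sys.μY {x | δ * b n ≤ (sys.τ x : ℝ)} := hID n (δ * b n)
          _ ≤ sys.μY ({x | δ * b n ≤ (sys.τ x : ℝ)} ∩ sys.Y) := hμYle _
          _ ≤ c * sys.m ({x | δ * b n ≤ (sys.τ x : ℝ)} ∩ sys.Y) := (hcd _).1
          _ ≤ c * sys.m {x | x ∈ sys.Y ∧ ⌈δ * b n⌉₊ ≤ sys.τ x} := by
              apply mul_le_mul_right
              apply measure_mono
              rintro x ⟨hx1, hx2⟩
              exact ⟨hx2, Nat.ceil_le.2 hx1⟩
          _ ≤ c * ENNReal.ofReal (C * ((⌈δ * b n⌉₊ : ℕ) : ℝ) ^ (-β)) :=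
              mul_le_mul_right (hCb _ hceil1) c
          _ ≤ c * ENNReal.ofReal (C * (δ * b n) ^ (-β)) := by
              apply mul_le_mul_right
              apply ENNReal.ofReal_le_ofReal
              apply mul_le_mul_of_nonneg_left _ hC.le
              exact Real.rpow_le_rpow_of_nonpos htpos (Nat.le_ceil _) (neg_nonpos.2 hβ.le)
          _ = ENNReal.ofReal (c.toReal * (C * (δ * b n) ^ (-β))) := by
              rw [ENNReal.ofReal_mul ENNReal.toReal_nonneg, ENNReal.ofReal_toReal hcT.ne]
          _ ≤ ENNReal.ofReal (C'' *
              (((max n 3 : ℕ) : ℝ) * Real.log ((max n 3 : ℕ) : ℝ) ^ p)⁻¹) := by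
              apply ENNReal.ofReal_le_ofReal
              have e1 : (δ * b n) ^ (-β)
                  = δ ^ (-β) * ((n:ℝ) ^ (1/β)) ^ (-β) * (Real.log n ^ (1/β + ε)) ^ (-β) := by
                rw [hbdef]
                rw [Real.mul_rpow hδpos.le (by positivity),
                  Real.mul_rpow (by positivity) (Real.rpow_nonneg hlogn _)]
                ring
              have e2 : ((n:ℝ) ^ (1/β)) ^ (-β) = (n:ℝ)⁻¹ := by
                rw [← Real.rpow_mul (Nat.cast_nonneg n),
                  show (1/β) * (-β) = -1 by field_simp]
                exact Real.rpow_neg_one _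
              have e3 : (Real.log n ^ (1/β + ε)) ^ (-β) = (Real.log (n:ℝ) ^ p)⁻¹ := by
                rw [← Real.rpow_mul hlogn, show (1/β + ε) * (-β) = -p by
                  rw [hp]; field_simp]
                rw [Real.rpow_neg hlogn]
              rw [e1, e2, e3, hmax, hC'']
              rw [mul_inv]
              ring_nf
              exact le_refl _
    have hae := ae_all_iff.2 hall
    filter_upwards [hae] with x hx
    apply sup_littleO_aux 3 hb_top hb_mono
    intro j
    filter_upwards [hx j] with n hn
    exact (not_le.1 hn).le
  · -- strong moment case
    intro hS
    have hIfin : ∫⁻ x, ENNReal.ofReal ((sys.τ x : ℝ) ^ β) ∂sys.m < ⊤ := by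
      have heq : ∀ x, ENNReal.ofReal ((sys.τ x : ℝ) ^ β) = ((sys.τ x : ℕ) : ℝ≥0∞) ^ β := by
        intro x
        rw [← ENNReal.ofReal_rpow_of_nonneg (Nat.cast_nonneg _) hβ.le, ENNReal.ofReal_natCast]
      calc ∫⁻ x, ENNReal.ofReal ((sys.τ x : ℝ) ^ β) ∂sys.m
          = ∫⁻ x, ((sys.τ x : ℕ) : ℝ≥0∞) ^ β ∂sys.m := lintegral_congr heq
        _ < ⊤ := hS
    have hg_meas : Measurable fun x => (sys.τ x : ℝ) ^ β := hτR.pow measurable_const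
    have hb_top : Tendsto (fun n : ℕ => (n:ℝ) ^ (1/β)) atTop atTop :=
      (tendsto_rpow_atTop hβ').comp tendsto_natCast_atTop_atTop
    have hb_mono : ∀ m n : ℕ, 0 ≤ m → m ≤ n → (m:ℝ) ^ (1/β) ≤ (n:ℝ) ^ (1/β) := by
      intro m n _ hmn
      exact Real.rpow_le_rpow (Nat.cast_nonneg m) (by exact_mod_cast hmn) hβ'.le
    have hall : ∀ j : ℕ, ∀ᵐ x ∂sys.μY, ∀ᶠ n : ℕ in atTop,
        ¬ ((1/((j:ℝ)+1)) * (n:ℝ) ^ (1/β) ≤ (sys.τ (sys.F^[n] x) : ℝ)) := by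
      intro j
      set δ : ℝ := 1/((j:ℝ)+1) with hδ
      have hδpos : 0 < δ := by positivity
      set a : ℝ := δ ^ β with ha
      have hapos : 0 < a := Real.rpow_pos_of_pos hδpos β
      have hstep : ∀ n : ℕ,
          sys.μY {x | δ * ((n+1:ℕ):ℝ) ^ (1/β) ≤ (sys.τ (sys.F^[n+1] x) : ℝ)}
            ≤ c * sys.m {x | ((n:ℝ)+1) * a ≤ (sys.τ x : ℝ) ^ β} := by
        intro n
        rw [hID (n+1) (δ * ((n+1:ℕ):ℝ) ^ (1/β))]
        have hsub : {x | δ * ((n+1:ℕ):ℝ) ^ (1/β) ≤ (sys.τ x : ℝ)}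
            ⊆ {x | ((n:ℝ)+1) * a ≤ (sys.τ x : ℝ) ^ β} := by
          intro x hx
          simp only [Set.mem_setOf_eq] at hx ⊢
          have h0 : (0:ℝ) ≤ δ * ((n+1:ℕ):ℝ) ^ (1/β) := by positivity
          have h2 := Real.rpow_le_rpow h0 hx hβ.le
          have h3 : (δ * ((n+1:ℕ):ℝ) ^ (1/β)) ^ β = ((n:ℝ)+1) * a := by
            rw [Real.mul_rpow hδpos.le (by positivity),
              ← Real.rpow_mul (by positivity), one_div, inv_mul_cancel₀ hβ0,
              Real.rpow_one]
            push_cast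
            ring
          rw [← h3]
          exact h2
        exact le_trans (measure_mono hsub) ((hcd _).1)
      apply ae_eventually_notMem
      rw [tsum_eq_zero_add' ENNReal.summable]
      apply ne_of_lt
      apply ENNReal.add_lt_top.2
      constructor
      · exact lt_of_le_of_lt prob_le_one ENNReal.one_lt_top
      · have hlc := layercake_aux sys.m hg_meas hapos
        have hS2 : ∑' n : ℕ, sys.m {x | ((n:ℝ)+1) * a ≤ (sys.τ x : ℝ) ^ β}
            ≤ (ENNReal.ofReal a)⁻¹ * ∫⁻ x, ENNReal.ofReal ((sys.τ x : ℝ) ^ β) ∂sys.m := by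
          have ha0 : ENNReal.ofReal a ≠ 0 := by
            simp only [ne_eq, ENNReal.ofReal_eq_zero, not_le]
            exact hapos
          calc ∑' n : ℕ, sys.m {x | ((n:ℝ)+1) * a ≤ (sys.τ x : ℝ) ^ β}
              = ((ENNReal.ofReal a)⁻¹ * ENNReal.ofReal a) *
                ∑' n : ℕ, sys.m {x | ((n:ℝ)+1) * a ≤ (sys.τ x : ℝ) ^ β} := by
                rw [ENNReal.inv_mul_cancel ha0 ENNReal.ofReal_ne_top, one_mul]
            _ = (ENNReal.ofReal a)⁻¹ * (ENNReal.ofReal a *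
                ∑' n : ℕ, sys.m {x | ((n:ℝ)+1) * a ≤ (sys.τ x : ℝ) ^ β}) := by
                rw [mul_assoc]
            _ ≤ _ := mul_le_mul_right hlc _
        calc ∑' n : ℕ, sys.μY {x | δ * ((n+1:ℕ):ℝ) ^ (1/β) ≤ (sys.τ (sys.F^[n+1] x) : ℝ)}
            ≤ ∑' n : ℕ, c * sys.m {x | ((n:ℝ)+1) * a ≤ (sys.τ x : ℝ) ^ β} :=
              ENNReal.tsum_le_tsum hstep
          _ = c * ∑' n : ℕ, sys.m {x | ((n:ℝ)+1) * a ≤ (sys.τ x : ℝ) ^ β} :=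
              ENNReal.tsum_mul_left
          _ ≤ c * ((ENNReal.ofReal a)⁻¹ *
              ∫⁻ x, ENNReal.ofReal ((sys.τ x : ℝ) ^ β) ∂sys.m) := mul_le_mul_right hS2 c
          _ < ⊤ := ENNReal.mul_lt_top hcT
              (ENNReal.mul_lt_top (ENNReal.inv_lt_top.2 (ENNReal.ofReal_pos.2 hapos)) hIfin)
    have hae := ae_all_iff.2 hall
    filter_upwards [hae] with x hx
    apply sup_littleO_aux 0 hb_top hb_mono
    intro j
    filter_upwards [hx j] with n hn
    exact (not_le.1 hn).le
end

section
/- On (Y, μ_Y), if m(τ ≥ n) ≥ κ n^{−β} for all n ≥ 1 and some β > 2, κ > 0, and if there are constants c > 0, C > 0 and θ ∈ (0,1) such that μ_Y(τ∘F^n = k) ≥ c·m(τ = k) for all n,k ≥ 0 and |μ_Y(A_k ∩ A_n) − μ_Y(A_k)μ_Y(A_n)| ≤ C θ^{|n−k|} μ_Y(A_k)μ_Y(A_n) for A_n = {τ∘F^n ≥ (n log n)^{1/β}}, then μ_Y-almost surely τ∘F^n ≥ (n log n)^{1/β} for infinitely many n. -/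
open MeasureTheory ProbabilityTheory Filter Asymptotics
open scoped ENNReal NNReal

/-- The event `A_n = {x ∈ Y : τ(Fⁿ x) ≥ (n log n)^{1/β}}`. -/
def NUESystem.bigReturn {X : Type*} [MetricSpace X] [MeasurableSpace X]
    (sys : NUESystem X) (β : ℝ) (n : ℕ) : Set X :=
  {x | x ∈ sys.Y ∧ ((n : ℝ) * Real.log n) ^ (1 / β) ≤ (sys.τ (sys.F^[n] x) : ℝ)}

section AuxBC
open Real Filter MeasureTheory
open scoped ENNReal


lemma aux_not_summable_inv_mul_log :
    ¬ Summable (fun n : ℕ => (((n:ℝ)+1) * Real.log ((n:ℝ)+1))⁻¹) := by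
  intro hsum
  set h : ℕ → ℝ := fun n => (((n:ℝ)+1) * Real.log ((n:ℝ)+1))⁻¹ with hh
  have h_nonneg : ∀ n, 0 ≤ h n := by
    intro n
    apply inv_nonneg.2
    apply mul_nonneg (by positivity)
    apply Real.log_nonneg (by push_cast; linarith)
  have h_mono : ∀ ⦃m n : ℕ⦄, 0 < m → m ≤ n → h n ≤ h m := by
    intro m n hm hmn
    have hm1 : (1:ℝ) < (m:ℝ)+1 := by
      have : (1:ℝ) ≤ (m:ℝ) := by exact_mod_cast hm
      linarith
    have hmn' : (m:ℝ) ≤ (n:ℝ) := by exact_mod_cast hmn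
    apply inv_anti₀
    · have hl : 0 < Real.log ((m:ℝ)+1) := Real.log_pos hm1
      positivity
    · apply mul_le_mul (by linarith) (Real.log_le_log (by linarith) (by linarith))
        (Real.log_nonneg (by linarith)) (by linarith)
  have hcond := (summable_condensed_iff_of_nonneg h_nonneg h_mono).2 hsum
  have key : ∀ k : ℕ, (2 * Real.log 2)⁻¹ * ((k:ℝ)+2)⁻¹ ≤ (2:ℝ)^k * h (2^k) := by
    intro k
    have h2k : (1:ℝ) ≤ (2:ℝ)^k := one_le_pow₀ (by norm_num)
    have hlogpos : 0 < Real.log ((2:ℝ)^k + 1) := Real.log_pos (by linarith)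
    have hlog2 : 0 < Real.log 2 := Real.log_pos (by norm_num)
    have hlogle : Real.log ((2:ℝ)^k + 1) ≤ ((k:ℝ)+2) * Real.log 2 := by
      calc Real.log ((2:ℝ)^k + 1) ≤ Real.log ((2:ℝ)^(k+2)) := by
            apply Real.log_le_log (by positivity)
            have h4 : (2:ℝ)^(k+2) = 4 * 2^k := by ring
            linarith
          _ = ((k:ℝ)+2) * Real.log 2 := by
            rw [Real.log_pow]; push_cast; ring
    have hgoal : h (2^k) = (((2:ℝ)^k + 1) * Real.log ((2:ℝ)^k + 1))⁻¹ := by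
      rw [hh]; push_cast; ring_nf
    rw [hgoal, ← mul_inv, ← one_div, ← div_eq_mul_inv,
      div_le_div_iff₀ (by positivity) (by positivity)]
    nlinarith [mul_le_mul hlogle (le_refl ((2:ℝ)^k + 1)) (by linarith) (by positivity)]
  have hsum2 : Summable (fun k : ℕ => (2 * Real.log 2)⁻¹ * ((k:ℝ)+2)⁻¹) := by
    apply Summable.of_nonneg_of_le (fun k => by positivity) key hcond
  have hlog2 : 0 < Real.log 2 := Real.log_pos (by norm_num)
  have hsum3 : Summable (fun k : ℕ => ((k:ℝ)+2)⁻¹) := by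
    have := hsum2.mul_left (2 * Real.log 2)
    simpa [mul_inv_cancel_left₀, ne_of_gt hlog2, mul_assoc,
      ← mul_assoc, mul_inv_cancel₀ (by positivity : (2 * Real.log 2) ≠ 0)] using this
  have : Summable (fun n : ℕ => ((n:ℝ))⁻¹) := by
    have h2 : Summable (fun k : ℕ => ((k+2 : ℕ):ℝ)⁻¹) := by
      convert hsum3 using 2 with k; push_cast; ring
    exact (summable_nat_add_iff 2).1 h2
  exact Real.not_summable_natCast_inv this

lemma aux_glog_nonneg (n : ℕ) : 0 ≤ ((n:ℝ) * Real.log n)⁻¹ := by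
  rcases Nat.eq_zero_or_pos n with h | h
  · simp [h]
  · have : (1:ℝ) ≤ n := by exact_mod_cast h
    have := Real.log_nonneg this
    positivity

lemma aux_sum_unbounded (p : ℕ → ℝ) (hp : ∀ n, 0 ≤ p n) (c' : ℝ) (hc' : 0 < c')
    (h : ∀ n : ℕ, 3 ≤ n → c' * ((n:ℝ) * Real.log n)⁻¹ ≤ p n) (M : ℕ) (B : ℝ) :
    ∃ N : ℕ, B ≤ ∑ n ∈ Finset.Icc M N, p n := by
  classical
  set g : ℕ → ℝ := fun n => ((n:ℝ) * Real.log n)⁻¹ with hg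
  have hgns : ¬ Summable g := by
    intro hs
    have : Summable (fun n : ℕ => g (n+1)) := (summable_nat_add_iff 1).2 hs
    apply aux_not_summable_inv_mul_log
    convert this using 2 with n
    have : ((n+1 : ℕ) : ℝ) = (n:ℝ) + 1 := by push_cast; ring
    simp [hg, this]
  have htend : Tendsto (fun N => ∑ i ∈ Finset.range N, g i) atTop atTop :=
    (not_summable_iff_tendsto_nat_atTop_of_nonneg aux_glog_nonneg).1 hgns
  set M' : ℕ := max M 3 with hM'
  obtain ⟨N0, hN0⟩ := (tendsto_atTop.1 (htend.const_mul_atTop hc')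
    (B + c' * ∑ i ∈ Finset.range M', g i)).exists
  refine ⟨max N0 M', ?_⟩
  set N : ℕ := max N0 M'
  have h1 : ∑ n ∈ Finset.Icc M N, p n ≥ ∑ n ∈ Finset.Icc M' N, p n := by
    apply Finset.sum_le_sum_of_subset_of_nonneg
    · apply Finset.Icc_subset_Icc_left (le_max_left _ _)
    · intro i _ _; exact hp i
  have h2 : ∑ n ∈ Finset.Icc M' N, p n ≥ ∑ n ∈ Finset.Icc M' N, c' * g n := by
    apply Finset.sum_le_sum
    intro i hi
    exact h i (le_trans (le_max_right _ _) (Finset.mem_Icc.1 hi).1)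
  have h3 : ∑ n ∈ Finset.Icc M' N, c' * g n
      = c' * ∑ i ∈ Finset.range (N+1), g i - c' * ∑ i ∈ Finset.range M', g i := by
    rw [← Finset.mul_sum, ← mul_sub]
    congr 1
    have : Finset.Icc M' N = Finset.range (N+1) \ Finset.range M' := by
      ext i; simp [Finset.mem_Icc, Nat.lt_succ_iff]; omega
    rw [this, Finset.sum_sdiff_eq_sub (Finset.range_subset_range.2 (by omega))]
  have h4 : B + c' * ∑ i ∈ Finset.range M', g i ≤ c' * ∑ i ∈ Finset.range (N+1), g i := by
    calc B + c' * ∑ i ∈ Finset.range M', g i ≤ c' * ∑ i ∈ Finset.range N0, g i := hN0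
      _ ≤ c' * ∑ i ∈ Finset.range (N+1), g i := by
          apply mul_le_mul_of_nonneg_left _ hc'.le
          apply Finset.sum_le_sum_of_subset_of_nonneg
          · exact Finset.range_subset_range.2 (by omega)
          · intro i _ _; exact aux_glog_nonneg i
  linarith

lemma aux_geom_sum {θ : ℝ} (hθ : θ ∈ Set.Ioo (0:ℝ) 1) (I : Finset ℕ) (n : ℕ) :
    ∑ k ∈ I.erase n, θ ^ (((n:ℤ) - (k:ℤ)).natAbs) ≤ 2 * (1-θ)⁻¹ := by
  classical
  have hθ0 : 0 < θ := hθ.1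
  have hsum : ∀ (s : Finset ℕ) (g : ℕ → ℕ), Set.InjOn g s →
      ∑ k ∈ s, θ ^ (g k) ≤ (1-θ)⁻¹ := by
    intro s g hinj
    rw [← Finset.sum_image (fun a ha b hb => hinj ha hb)]
    calc ∑ j ∈ s.image g, θ^j ≤ ∑' j : ℕ, θ^j := by
          apply Summable.sum_le_tsum _ (fun j _ => by positivity)
          exact summable_geometric_of_lt_one hθ.1.le hθ.2
      _ = (1-θ)⁻¹ := tsum_geometric_of_lt_one hθ.1.le hθ.2
  have hsplit : I.erase n = (I.erase n).filter (· < n) ∪ (I.erase n).filter (¬ · < n) :=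
    (Finset.filter_union_filter_not_eq _ _).symm
  rw [hsplit, Finset.sum_union (Finset.disjoint_filter_filter_not _ _ _)]
  have b1 : ∑ k ∈ (I.erase n).filter (· < n), θ ^ (((n:ℤ) - (k:ℤ)).natAbs) ≤ (1-θ)⁻¹ := by
    apply hsum
    intro a ha b hb hab
    simp only [Finset.mem_filter, Finset.mem_coe] at ha hb
    change ((n:ℤ) - (a:ℤ)).natAbs = ((n:ℤ) - (b:ℤ)).natAbs at hab
    omega
  have b2 : ∑ k ∈ (I.erase n).filter (¬ · < n), θ ^ (((n:ℤ) - (k:ℤ)).natAbs) ≤ (1-θ)⁻¹ := by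
    apply hsum
    intro a ha b hb hab
    simp only [Finset.mem_filter, Finset.mem_coe] at ha hb
    change ((n:ℤ) - (a:ℤ)).natAbs = ((n:ℤ) - (b:ℤ)).natAbs at hab
    omega
  linarith

lemma aux_chung_erdos {Ω : Type*} [MeasurableSpace Ω] (μ : Measure Ω)
    (A : ℕ → Set Ω) (hA : ∀ n, MeasurableSet (A n)) (I : Finset ℕ) :
    (∑ n ∈ I, μ (A n)) ^ 2 ≤ (∑ n ∈ I, ∑ k ∈ I, μ (A n ∩ A k)) * μ (⋃ n ∈ I, A n) := by
  classical
  set f : Ω → ℝ≥0∞ := fun x => ∑ n ∈ I, (A n).indicator 1 x with hf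
  set U : Set Ω := ⋃ n ∈ I, A n with hU
  have hUm : MeasurableSet U := MeasurableSet.biUnion I.countable_toSet (fun n _ => hA n)
  have hfm : Measurable f := Finset.measurable_sum _ (fun n _ => (measurable_one.indicator (hA n)))
  have hgm : Measurable (U.indicator (1 : Ω → ℝ≥0∞)) := measurable_one.indicator hUm
  -- ∫ f = ∑ μ (A n)
  have hintf : ∫⁻ x, f x ∂μ = ∑ n ∈ I, μ (A n) := by
    rw [hf, lintegral_finset_sum _ (fun n _ => measurable_one.indicator (hA n))]
    refine Finset.sum_congr rfl fun n _ => ?_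
    rw [lintegral_indicator_one (hA n)]
  -- f = f * indicator U
  have hfeq : ∀ x, f x = f x * U.indicator 1 x := by
    intro x
    by_cases hx : x ∈ U
    · simp [Set.indicator_of_mem hx]
    · have : f x = 0 := by
        rw [hf]
        apply Finset.sum_eq_zero
        intro n hn
        apply Set.indicator_of_notMem
        exact fun hxn => hx (Set.mem_biUnion hn hxn)
      simp [this]
  -- ∫ f^2 = double sum
  have hintf2 : ∫⁻ x, f x ^ (2:ℝ) ∂μ = ∑ n ∈ I, ∑ k ∈ I, μ (A n ∩ A k) := by
    have hsq : ∀ x, f x ^ (2:ℝ) = ∑ n ∈ I, ∑ k ∈ I, ((A n ∩ A k).indicator 1 x : ℝ≥0∞) := by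
      intro x
      rw [ENNReal.rpow_two, sq, hf, Finset.sum_mul_sum]
      refine Finset.sum_congr rfl fun n _ => Finset.sum_congr rfl fun k _ => ?_
      by_cases hn : x ∈ A n <;> by_cases hk : x ∈ A k <;>
        simp [Set.indicator_apply, hn, hk, Set.mem_inter_iff]
    simp_rw [hsq]
    rw [lintegral_finset_sum _ (fun n _ => Finset.measurable_sum _
      (fun k _ => measurable_one.indicator ((hA n).inter (hA k))))]
    refine Finset.sum_congr rfl fun n _ => ?_
    rw [lintegral_finset_sum _ (fun k _ => measurable_one.indicator ((hA n).inter (hA k)))]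
    exact Finset.sum_congr rfl fun k _ => lintegral_indicator_one ((hA n).inter (hA k))
  -- Cauchy-Schwarz
  have hcs := ENNReal.lintegral_mul_le_Lp_mul_Lq μ ((⟨by norm_num, by norm_num, by norm_num⟩ : Real.HolderConjugate 2 2))
    hfm.aemeasurable hgm.aemeasurable
  have hg2 : ∫⁻ x, (U.indicator (1:Ω→ℝ≥0∞) x) ^ (2:ℝ) ∂μ = μ U := by
    have : ∀ x, (U.indicator (1:Ω→ℝ≥0∞) x) ^ (2:ℝ) = U.indicator 1 x := by
      intro x; by_cases hx : x ∈ U <;> simp [Set.indicator_apply, hx]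
    simp_rw [this]; exact lintegral_indicator_one hUm
  rw [hg2] at hcs
  simp only [Pi.mul_apply] at hcs
  have hfg : ∫⁻ x, f x * U.indicator (1:Ω→ℝ≥0∞) x ∂μ = ∑ n ∈ I, μ (A n) := by
    rw [← hintf]; exact lintegral_congr fun x => (hfeq x).symm
  rw [hfg, hintf2] at hcs
  -- now square
  calc (∑ n ∈ I, μ (A n)) ^ 2
      ≤ ((∑ n ∈ I, ∑ k ∈ I, μ (A n ∩ A k)) ^ (1/(2:ℝ)) * μ U ^ (1/(2:ℝ))) ^ 2 := by
        exact pow_le_pow_left' hcs 2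
    _ = (∑ n ∈ I, ∑ k ∈ I, μ (A n ∩ A k)) * μ U := by
        rw [mul_pow, ← ENNReal.rpow_natCast _ 2, ← ENNReal.rpow_natCast _ 2,
          ← ENNReal.rpow_mul, ← ENNReal.rpow_mul]
        norm_num

end AuxBC

/-- **Borel–Cantelli lower bound for large returns** (from the proof of
Proposition 4.5). If `m(τ ≥ n) ≥ κ' n^{-β}` with `β > 2`, returns dominate the
reference measure along the orbit (`μ_Y(τ∘Fⁿ = k) ≥ c·m(τ = k)`), and the events
`A_n = {τ∘Fⁿ ≥ (n log n)^{1/β}}` are exponentially mixing, then `μ_Y`-almost surely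
`τ(Fⁿ x) ≥ (n log n)^{1/β}` for infinitely many `n`. -/
theorem large_returns_infinitely_often {X : Type*} [MetricSpace X] [MeasurableSpace X]
    [BorelSpace X] [CompleteSpace X] [TopologicalSpace.SeparableSpace X]
    (hbd : Bornology.IsBounded (Set.univ : Set X))
    (sys : NUESystem X) (β : ℝ) (hβ : 2 < β)
    (κ' : ℝ) (hκ' : 0 < κ')
    (hlower : ∀ n : ℕ, 1 ≤ n →
      ENNReal.ofReal (κ' * (n : ℝ) ^ (-β)) ≤ sys.m {x | x ∈ sys.Y ∧ n ≤ sys.τ x})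
    (c : ℝ) (hc : 0 < c)
    (hdom : ∀ n k : ℕ,
      ENNReal.ofReal c * sys.m {x | x ∈ sys.Y ∧ sys.τ x = k}
        ≤ sys.μY {x | sys.τ (sys.F^[n] x) = k})
    (C θ : ℝ) (hC : 0 < C) (hθ : θ ∈ Set.Ioo (0 : ℝ) 1)
    (hmix : ∀ n k : ℕ, n ≠ k →
      |(sys.μY (sys.bigReturn β k ∩ sys.bigReturn β n)).toReal
          - (sys.μY (sys.bigReturn β k)).toReal * (sys.μY (sys.bigReturn β n)).toReal|
        ≤ C * θ ^ (((n : ℤ) - (k : ℤ)).natAbs) *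
            (sys.μY (sys.bigReturn β k)).toReal * (sys.μY (sys.bigReturn β n)).toReal) :
    ∀ᵐ x ∂sys.μY, ∃ᶠ n : ℕ in atTop,
      ((n : ℝ) * Real.log n) ^ (1 / β) ≤ (sys.τ (sys.F^[n] x) : ℝ) := by
  classical
  have hprob : IsProbabilityMeasure sys.μY := sys.hμYprob
  have hYm : MeasurableSet sys.Y := sys.hYclosed.measurableSet
  -- measurability of F and the events
  have hFm : Measurable sys.F := by
    have hg : Measurable (fun p : X × ℕ => sys.f^[p.2] p.1) :=
      measurable_from_prod_countable_left (fun n => sys.hfm.iterate n)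
    exact hg.comp (measurable_id.prodMk sys.hτm)
  have hτF : ∀ n : ℕ, Measurable (fun x => sys.τ (sys.F^[n] x)) :=
    fun n => sys.hτm.comp (hFm.iterate n)
  set A : ℕ → Set X := sys.bigReturn β with hAdef
  have hAm : ∀ n, MeasurableSet (A n) := by
    intro n
    have : A n = sys.Y ∩ (fun x => (sys.τ (sys.F^[n] x) : ℝ)) ⁻¹'
        Set.Ici (((n : ℝ) * Real.log n) ^ (1 / β)) := by
      rfl
    rw [this]
    exact hYm.inter ((measurable_from_nat.comp (hτF n)) measurableSet_Ici)
  set p : ℕ → ℝ := fun n => (sys.μY (A n)).toReal with hpdef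
  have hp0 : ∀ n, 0 ≤ p n := fun n => ENNReal.toReal_nonneg
  have hp1 : ∀ n, p n ≤ 1 := by
    intro n
    rw [hpdef]
    exact ENNReal.toReal_le_of_le_ofReal zero_le_one (by simpa using prob_le_one)
  have hβ0 : (0:ℝ) < β := by linarith
  -- Step (a): lower bound on p n
  have hlb : ∀ n : ℕ, 3 ≤ n →
      (c * κ' * 2 ^ (-β)) * ((n:ℝ) * Real.log n)⁻¹ ≤ p n := by
    intro n hn3
    set L : ℝ := (n:ℝ) * Real.log n with hL
    have hn3' : (3:ℝ) ≤ (n:ℝ) := by exact_mod_cast hn3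
    have hlog1 : (1:ℝ) ≤ Real.log n := by
      rw [Real.le_log_iff_exp_le (by linarith)]
      calc Real.exp 1 ≤ 2.7182818286 := Real.exp_one_lt_d9.le
        _ ≤ (n:ℝ) := by linarith
    have hL1 : (1:ℝ) ≤ L := by rw [hL]; nlinarith
    have hLpos : (0:ℝ) < L := by linarith
    set a : ℝ := L ^ (1/β) with ha
    have ha1 : (1:ℝ) ≤ a := by
      have h := Real.rpow_le_rpow zero_le_one hL1 (by positivity : (0:ℝ) ≤ 1/β)
      rwa [Real.one_rpow] at h
    set N : ℕ := ⌈a⌉₊ with hN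
    have hN1 : 1 ≤ N := Nat.one_le_ceil_iff.2 (by linarith)
    have hNpos : (0:ℝ) < (N:ℝ) := by exact_mod_cast hN1
    have haN : a ≤ (N:ℝ) := Nat.le_ceil a
    have hN2a : (N:ℝ) ≤ 2*a := by
      have := Nat.ceil_lt_add_one (by linarith : (0:ℝ) ≤ a)
      linarith
    set S : ℕ → Set X := fun j => {x | sys.τ (sys.F^[n] x) = N + j} with hS
    set T : ℕ → Set X := fun j => {x | x ∈ sys.Y ∧ sys.τ x = N + j} with hT
    have hSm : ∀ j, MeasurableSet (S j) := fun j => (hτF n) (measurableSet_singleton (N+j))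
    have hSd : Pairwise (Function.onFun Disjoint S) := by
      intro i j hij
      refine Set.disjoint_left.2 fun x hxi hxj => hij ?_
      have h1 : sys.τ (sys.F^[n] x) = N + i := hxi
      have h2 : sys.τ (sys.F^[n] x) = N + j := hxj
      omega
    have hTm : ∀ j, MeasurableSet (T j) :=
      fun j => hYm.inter (sys.hτm (measurableSet_singleton (N+j)))
    have hTd : Pairwise (Function.onFun Disjoint T) := by
      intro i j hij
      refine Set.disjoint_left.2 fun x hxi hxj => hij ?_
      have h1 : sys.τ x = N + i := hxi.2
      have h2 : sys.τ x = N + j := hxj.2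
      omega
    have hTU : (⋃ j, T j) = {x | x ∈ sys.Y ∧ N ≤ sys.τ x} := by
      ext x
      simp only [Set.mem_iUnion, hT, Set.mem_setOf_eq]
      constructor
      · rintro ⟨j, hxY, hτx⟩; exact ⟨hxY, by omega⟩
      · rintro ⟨hxY, hτx⟩; exact ⟨sys.τ x - N, hxY, by omega⟩
    have hsub : (⋃ j, S j) ⊆ A n ∪ sys.Yᶜ := by
      intro x hx
      obtain ⟨j, hj⟩ := Set.mem_iUnion.1 hx
      by_cases hxY : x ∈ sys.Y
      · left
        refine ⟨hxY, ?_⟩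
        have hτx : sys.τ (sys.F^[n] x) = N + j := hj
        have : (N:ℝ) ≤ (sys.τ (sys.F^[n] x) : ℝ) := by
          rw [hτx]; push_cast; linarith [Nat.cast_nonneg (α := ℝ) j]
        calc ((n:ℝ) * Real.log n) ^ (1/β) = a := by rw [ha, hL]
          _ ≤ (N:ℝ) := haN
          _ ≤ _ := this
      · right; exact hxY
    have key1 : ENNReal.ofReal c * sys.m {x | x ∈ sys.Y ∧ N ≤ sys.τ x} ≤ sys.μY (A n) := by
      calc ENNReal.ofReal c * sys.m {x | x ∈ sys.Y ∧ N ≤ sys.τ x}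
          = ENNReal.ofReal c * ∑' j, sys.m (T j) := by rw [← hTU, measure_iUnion hTd hTm]
        _ = ∑' j, ENNReal.ofReal c * sys.m (T j) := ENNReal.tsum_mul_left.symm
        _ ≤ ∑' j, sys.μY (S j) := ENNReal.tsum_le_tsum fun j => hdom n (N+j)
        _ = sys.μY (⋃ j, S j) := (measure_iUnion hSd hSm).symm
        _ ≤ sys.μY (A n ∪ sys.Yᶜ) := measure_mono hsub
        _ ≤ sys.μY (A n) + sys.μY sys.Yᶜ := measure_union_le _ _
        _ = sys.μY (A n) := by rw [sys.hμYsupp, add_zero]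
    have key2 := hlower N hN1
    have hnum : (c * κ' * 2 ^ (-β)) * L⁻¹ ≤ c * (κ' * (N:ℝ) ^ (-β)) := by
      have h1 : ((2:ℝ)*a) ^ (-β) ≤ (N:ℝ) ^ (-β) :=
        Real.rpow_le_rpow_of_nonpos hNpos hN2a (by linarith)
      have h2 : ((2:ℝ)*a) ^ (-β) = 2 ^ (-β) * a ^ (-β) :=
        Real.mul_rpow (by norm_num) (by linarith)
      have h3 : a ^ (-β) = L⁻¹ := by
        rw [ha, ← Real.rpow_mul hLpos.le,
          show (1/β) * (-β) = (-1 : ℝ) by field_simp, Real.rpow_neg_one]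
      have h2pow : (0:ℝ) < (2:ℝ) ^ (-β) := Real.rpow_pos_of_pos (by norm_num) _
      have : 2 ^ (-β) * L⁻¹ ≤ (N:ℝ) ^ (-β) := by rw [← h3, ← h2]; exact h1
      calc (c * κ' * 2 ^ (-β)) * L⁻¹ = c * (κ' * (2 ^ (-β) * L⁻¹)) := by ring
        _ ≤ c * (κ' * (N:ℝ) ^ (-β)) := by
            apply mul_le_mul_of_nonneg_left _ hc.le
            exact mul_le_mul_of_nonneg_left this hκ'.le
    have hfinal : ENNReal.ofReal ((c * κ' * 2 ^ (-β)) * L⁻¹) ≤ sys.μY (A n) := by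
      calc ENNReal.ofReal ((c * κ' * 2 ^ (-β)) * L⁻¹)
          ≤ ENNReal.ofReal (c * (κ' * (N:ℝ) ^ (-β))) := ENNReal.ofReal_le_ofReal hnum
        _ = ENNReal.ofReal c * ENNReal.ofReal (κ' * (N:ℝ) ^ (-β)) :=
            ENNReal.ofReal_mul hc.le
        _ ≤ ENNReal.ofReal c * sys.m {x | x ∈ sys.Y ∧ N ≤ sys.τ x} :=
            mul_le_mul_right key2 _
        _ ≤ sys.μY (A n) := key1
    rw [hpdef]
    exact (ENNReal.ofReal_le_iff_le_toReal (measure_ne_top _ _)).1 hfinal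
  -- Step (b): each tail union has full measure
  have hθ0 : (0:ℝ) < θ := hθ.1
  have hc' : (0:ℝ) < c * κ' * 2 ^ (-β) := by
    have : (0:ℝ) < (2:ℝ) ^ (-β) := Real.rpow_pos_of_pos (by norm_num) _
    positivity
  have hU1 : ∀ M : ℕ, sys.μY (⋃ j : ℕ, A (M + j)) = 1 := by
    intro M
    set U : Set X := ⋃ j : ℕ, A (M + j) with hUdef
    have hUm : MeasurableSet U := MeasurableSet.iUnion fun j => hAm _
    have hUfin : sys.μY U ≠ ⊤ := measure_ne_top _ _
    set u : ℝ := (sys.μY U).toReal with hu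
    have hu0 : 0 ≤ u := ENNReal.toReal_nonneg
    have h1θ : (0:ℝ) < 1 - θ := by have := hθ.2; linarith
    set K : ℝ := 1 + 2*C*(1-θ)⁻¹ with hK
    have hKpos : (0:ℝ) < K := by positivity
    have hkey : ∀ N : ℕ, (∑ n ∈ Finset.Icc M N, p n)^2
        ≤ ((∑ n ∈ Finset.Icc M N, p n)^2 + K * (∑ n ∈ Finset.Icc M N, p n)) * u := by
      intro N
      set I := Finset.Icc M N with hI
      set s := ∑ n ∈ I, p n with hs
      have hs0 : 0 ≤ s := Finset.sum_nonneg fun n _ => hp0 n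
      have hsub : (⋃ n ∈ I, A n) ⊆ U := by
        intro x hx
        obtain ⟨n, hnI, hxA⟩ := Set.mem_iUnion₂.1 hx
        have hMn : M ≤ n := (Finset.mem_Icc.1 hnI).1
        refine Set.mem_iUnion.2 ⟨n - M, ?_⟩
        rwa [Nat.add_sub_cancel' hMn]
      have hcs2 : (∑ n ∈ I, sys.μY (A n))^2
          ≤ (∑ n ∈ I, ∑ k ∈ I, sys.μY (A n ∩ A k)) * sys.μY U :=
        (aux_chung_erdos sys.μY A hAm I).trans
          (mul_le_mul_right (measure_mono hsub) _)
      have hDfin : (∑ n ∈ I, ∑ k ∈ I, sys.μY (A n ∩ A k)) ≠ ⊤ :=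
        (ENNReal.sum_lt_top.2 fun n _ =>
          ENNReal.sum_lt_top.2 fun k _ => measure_lt_top _ _).ne
      have hreal : s^2 ≤ (∑ n ∈ I, ∑ k ∈ I, (sys.μY (A n ∩ A k)).toReal) * u := by
        have h := ENNReal.toReal_mono
          (ENNReal.mul_ne_top hDfin hUfin) hcs2
        rw [ENNReal.toReal_pow, ENNReal.toReal_mul,
          ENNReal.toReal_sum (fun n _ => measure_ne_top _ _)] at h
        have hDeq : (∑ n ∈ I, ∑ k ∈ I, sys.μY (A n ∩ A k)).toReal
            = ∑ n ∈ I, ∑ k ∈ I, (sys.μY (A n ∩ A k)).toReal := by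
          rw [ENNReal.toReal_sum
            (fun n _ => (ENNReal.sum_lt_top.2 fun k _ => measure_lt_top _ _).ne)]
          exact Finset.sum_congr rfl fun n _ =>
            ENNReal.toReal_sum (fun k _ => measure_ne_top _ _)
        rw [hDeq] at h
        exact h
      have hD : (∑ n ∈ I, ∑ k ∈ I, (sys.μY (A n ∩ A k)).toReal) ≤ s^2 + K * s := by
        have hrow : ∀ n ∈ I, ∑ k ∈ I, (sys.μY (A n ∩ A k)).toReal ≤ p n * (s + K) := by
          intro n hnI
          rw [← Finset.add_sum_erase I _ hnI]
          have hdiag : (sys.μY (A n ∩ A n)).toReal = p n := by rw [Set.inter_self]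
          have hoff : ∀ k ∈ I.erase n, (sys.μY (A n ∩ A k)).toReal
              ≤ p n * p k + C * θ ^ (((n:ℤ) - (k:ℤ)).natAbs) * p n := by
            intro k hk
            have hkn : k ≠ n := Finset.ne_of_mem_erase hk
            have hm := hmix k n hkn
            have habs : ((k:ℤ) - (n:ℤ)).natAbs = ((n:ℤ) - (k:ℤ)).natAbs := by omega
            rw [habs] at hm
            have hθpow : (0:ℝ) ≤ θ ^ (((n:ℤ) - (k:ℤ)).natAbs) := by positivity
            have h1 := (abs_le.1 hm).2
            have h2 : C * θ ^ (((n:ℤ) - (k:ℤ)).natAbs) * p n * p k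
                ≤ C * θ ^ (((n:ℤ) - (k:ℤ)).natAbs) * p n := by
              have : C * θ ^ (((n:ℤ) - (k:ℤ)).natAbs) * p n * p k
                  ≤ C * θ ^ (((n:ℤ) - (k:ℤ)).natAbs) * p n * 1 :=
                mul_le_mul_of_nonneg_left (hp1 k) (by positivity)
              linarith
            have hpnk : (sys.μY (A n ∩ A k)).toReal = (sys.μY (A n ∩ A k)).toReal := rfl
            nlinarith [hp0 n, hp0 k]
          calc (sys.μY (A n ∩ A n)).toReal + ∑ k ∈ I.erase n, (sys.μY (A n ∩ A k)).toReal
              ≤ p n + ∑ k ∈ I.erase n,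
                  (p n * p k + C * θ ^ (((n:ℤ) - (k:ℤ)).natAbs) * p n) := by
                rw [hdiag]
                exact add_le_add_right (Finset.sum_le_sum hoff) _
            _ = p n + (p n * ∑ k ∈ I.erase n, p k
                  + C * p n * ∑ k ∈ I.erase n, θ ^ (((n:ℤ) - (k:ℤ)).natAbs)) := by
                rw [Finset.sum_add_distrib, Finset.mul_sum, Finset.mul_sum]
                congr 1
                congr 1
                refine Finset.sum_congr rfl fun k _ => by ring
            _ ≤ p n + (p n * s + C * p n * (2 * (1-θ)⁻¹)) := by
                have he1 : ∑ k ∈ I.erase n, p k ≤ s := by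
                  apply Finset.sum_le_sum_of_subset_of_nonneg (Finset.erase_subset n I)
                  intro k _ _; exact hp0 k
                have he2 := aux_geom_sum hθ I n
                have := hp0 n
                have hCpn : 0 ≤ C * p n := by positivity
                nlinarith
            _ = p n * (s + K) := by rw [hK]; ring
        calc (∑ n ∈ I, ∑ k ∈ I, (sys.μY (A n ∩ A k)).toReal)
            ≤ ∑ n ∈ I, p n * (s + K) := Finset.sum_le_sum hrow
          _ = s * (s + K) := by rw [← Finset.sum_mul]
          _ = s^2 + K * s := by ring
      calc s^2 ≤ (∑ n ∈ I, ∑ k ∈ I, (sys.μY (A n ∩ A k)).toReal) * u := hreal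
        _ ≤ (s^2 + K * s) * u := mul_le_mul_of_nonneg_right hD hu0
    have hu_ge : 1 ≤ u := by
      by_contra hlt
      push_neg at hlt
      have h1u : (0:ℝ) < 1 - u := by linarith
      obtain ⟨N, hNs⟩ := aux_sum_unbounded p hp0 _ hc' hlb M (max 1 (u*K/(1-u) + 1))
      set s := ∑ n ∈ Finset.Icc M N, p n with hs
      have hs1 : (1:ℝ) ≤ s := le_trans (le_max_left _ _) hNs
      have hs2 : u*K/(1-u) + 1 ≤ s := le_trans (le_max_right _ _) hNs
      have hsK : u*K < s*(1-u) := by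
        have := (div_le_iff₀ h1u).1 (by linarith : u*K/(1-u) ≤ s - 1)
        nlinarith
      have hk := hkey N
      nlinarith [hk, mul_lt_mul_of_pos_left hsK (by linarith : (0:ℝ) < s)]
    refine le_antisymm prob_le_one ?_
    have heq : sys.μY U = ENNReal.ofReal u := (ENNReal.ofReal_toReal hUfin).symm
    rw [heq, ← ENNReal.ofReal_one]
    exact ENNReal.ofReal_le_ofReal hu_ge
  -- Step (c): conclusion
  have hG : ∀ᵐ x ∂sys.μY, x ∈ ⋂ M : ℕ, ⋃ j : ℕ, A (M + j) := by
    rw [ae_iff]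
    have : {x | ¬ x ∈ ⋂ M : ℕ, ⋃ j : ℕ, A (M + j)}
        = ⋃ M : ℕ, (⋃ j : ℕ, A (M + j))ᶜ := by
      ext x; simp [Set.mem_iInter, Set.mem_iUnion]
    rw [this]
    refine measure_iUnion_null fun M => ?_
    have hm : MeasurableSet (⋃ j : ℕ, A (M + j)) := MeasurableSet.iUnion fun j => hAm _
    rw [measure_compl hm (measure_ne_top _ _), hU1 M, measure_univ, tsub_self]
  filter_upwards [hG] with x hx
  rw [frequently_atTop]
  intro M
  obtain ⟨j, hj⟩ := Set.mem_iUnion.1 (Set.mem_iInter.1 hx M)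
  exact ⟨M + j, Nat.le_add_right M j, hj.2⟩
end
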